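/- arXiv:2208.14644 — 5 statements merged into one kernel-verified Lean document; each statement's English description precedes it below -/
import Mathlib

section
/- If f is in the class S*_ρ of starlike functions associated with the petal-shaped domain (i.e., z f'(z)/f(z) is subordinate to 1 + arcsinh z on the unit disk), with Taylor expansion f(z) = z + Σ_{n≥2} a_n z^n, then |a_2| ≤ 1. -/
open Metric Filter Complex

/-- Principal branch of the complex inverse hyperbolic sine:
`arcsinh ζ = log (ζ + (1 + ζ²)^(1/2))`. -/
noncomputable def carcsinh (ζ : ℂ) : ℂ :=
  Complex.log (ζ + (1 + ζ ^ 2) ^ ((1 : ℂ) / 2))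

/-- `f` belongs to the class `S*_ρ` of starlike functions associated with the
petal-shaped domain: `f` is analytic on the unit disk with `f 0 = 0`,
`f' 0 = 1`, and there is a Schwarz function `w` with
`z f'(z) = f(z) (1 + arcsinh (w z))` on the unit disk. -/
def InStarRho (f : ℂ → ℂ) : Prop :=
  AnalyticOnNhd ℂ f (ball (0 : ℂ) 1) ∧ f 0 = 0 ∧ deriv f 0 = 1 ∧
    ∃ w : ℂ → ℂ, AnalyticOnNhd ℂ w (ball (0 : ℂ) 1) ∧ w 0 = 0 ∧
      (∀ z ∈ ball (0 : ℂ) 1, ‖w z‖ ≤ ‖z‖) ∧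
      ∀ z ∈ ball (0 : ℂ) 1, z * deriv f z = f z * (1 + carcsinh (w z))

lemma carcsinh_zero : carcsinh 0 = 0 := by
  simp [carcsinh]

lemma carcsinh_analyticAt : AnalyticAt ℂ carcsinh 0 := by
  have h1 : AnalyticAt ℂ (fun ζ : ℂ => (1 + ζ ^ 2) ^ ((1 : ℂ) / 2)) 0 := by
    refine AnalyticAt.cpow ?_ analyticAt_const (by simp)
    exact analyticAt_const.add ((analyticAt_id).pow 2)
  have h2 : AnalyticAt ℂ (fun ζ : ℂ => ζ + (1 + ζ ^ 2) ^ ((1 : ℂ) / 2)) 0 :=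
    (analyticAt_id).add h1
  exact h2.clog (by simp)

lemma carcsinh_hasDerivAt : HasDerivAt carcsinh 1 0 := by
  have hc : HasDerivAt (fun ζ : ℂ => 1 + ζ ^ 2) 0 0 := by
    simpa using ((hasDerivAt_pow 2 (0 : ℂ)).const_add 1)
  have hpow : HasDerivAt (fun ζ : ℂ => (1 + ζ ^ 2) ^ ((1 : ℂ) / 2)) 0 0 := by
    have := hc.cpow_const (c := (1:ℂ)/2) (by simp : (fun ζ : ℂ => 1 + ζ ^ 2) 0 ∈ Complex.slitPlane)
    simpa using this
  have hu : HasDerivAt (fun ζ : ℂ => ζ + (1 + ζ ^ 2) ^ ((1 : ℂ) / 2)) 1 0 := by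
    exact ((hasDerivAt_id' (0 : ℂ)).add hpow).congr_deriv (add_zero 1)
  have hval : (fun ζ : ℂ => ζ + (1 + ζ ^ 2) ^ ((1 : ℂ) / 2)) 0 = 1 := by simp
  have hlog : HasDerivAt Complex.log 1
      ((fun ζ : ℂ => ζ + (1 + ζ ^ 2) ^ ((1 : ℂ) / 2)) 0) := by
    rw [hval]
    simpa using Complex.hasDerivAt_log (by simp : (1 : ℂ) ∈ Complex.slitPlane)
  have h := hlog.comp 0 hu
  have he : Complex.log ∘ (fun ζ : ℂ => ζ + (1 + ζ ^ 2) ^ ((1 : ℂ) / 2)) = carcsinh := rfl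
  rw [he] at h
  simpa using h

theorem abs_a2_le_one (f : ℂ → ℂ) (a : ℕ → ℂ) (hf : InStarRho f)
    (ha0 : a 0 = 0) (ha1 : a 1 = 1)
    (hrep : ∀ z ∈ ball (0 : ℂ) 1, HasSum (fun n : ℕ => a n * z ^ n) (f z)) :
    ‖a 2‖ ≤ 1 := by
  obtain ⟨hfa, hf0, hf1, w, hwa, hw0, hwb, heqn⟩ := hf
  have h0mem : (0 : ℂ) ∈ ball (0 : ℂ) 1 := by simp
  have hBall_nhds : ball (0 : ℂ) 1 ∈ nhds (0 : ℂ) := isOpen_ball.mem_nhds h0mem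
  -- Step 1: the power series gives `deriv (deriv f) 0 = 2 * a 2`.
  set p : FormalMultilinearSeries ℂ ℂ ℂ := FormalMultilinearSeries.ofScalars ℂ a with hp
  have hrad : ((2 : NNReal)⁻¹ : NNReal) ≤ p.radius := by
    have hhalf : ((2 : ℂ)⁻¹) ∈ ball (0 : ℂ) 1 := by
      simp [mem_ball]; norm_num
    have hs : Summable (fun n => a n * ((2 : ℂ)⁻¹) ^ n) := (hrep _ hhalf).summable
    have hn : Filter.Tendsto (fun n => ‖a n * ((2 : ℂ)⁻¹) ^ n‖) atTop (nhds 0) := by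
      simpa using hs.tendsto_atTop_zero.norm
    refine p.le_radius_of_eventually_le 1 ?_
    filter_upwards [hn.eventually_le_const (by norm_num : (0:ℝ) < 1)] with n hn1
    rw [norm_mul, norm_pow] at hn1
    calc ‖p n‖ * ((2 : NNReal)⁻¹ : ℝ) ^ n = ‖a n‖ * ‖(2 : ℂ)⁻¹‖ ^ n := by
          rw [hp, FormalMultilinearSeries.ofScalars_norm]
          norm_num
      _ ≤ 1 := hn1
  have hball : HasFPowerSeriesOnBall f p 0 ((2 : NNReal)⁻¹ : NNReal) := by
    refine ⟨by exact_mod_cast hrad, by norm_num, ?_⟩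
    intro y hy
    rw [mem_emetric_ball_zero_iff] at hy
    have hy' : ‖y‖ < 1 := by
      have h2 : ‖y‖₊ < (2 : NNReal)⁻¹ := by exact_mod_cast hy
      have : (‖y‖₊ : ℝ) < ((2 : NNReal)⁻¹ : ℝ) := by exact_mod_cast h2
      simpa using this.trans (by norm_num)
    have hsum := hrep y (by simpa [mem_ball] using hy')
    have hfun : (fun n => p n fun _ => y) = fun n => a n * y ^ n := by
      funext n
      rw [hp, FormalMultilinearSeries.ofScalars_apply_eq, smul_eq_mul]
    rw [zero_add, hfun]
    exact hsum
  have hd2 : deriv (deriv f) 0 = 2 * a 2 := by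
    have h := hball.factorial_smul (1 : ℂ) 2
    have hL : (Nat.factorial 2) • (p 2 fun _ => (1 : ℂ)) = 2 * a 2 := by
      rw [hp, FormalMultilinearSeries.ofScalars_apply_eq]
      simp [Nat.factorial]
    have hR : iteratedFDeriv ℂ 2 f 0 (fun _ => (1 : ℂ)) = deriv (deriv f) 0 := by
      have : iteratedDeriv 2 f 0 = iteratedFDeriv ℂ 2 f 0 (fun _ => (1 : ℂ)) := rfl
      rw [← this, iteratedDeriv_succ, iteratedDeriv_one]
    rw [hL, hR] at h
    exact h.symm
  -- Step 2: facts about w and Aw := carcsinh ∘ w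
  set Aw : ℂ → ℂ := fun z => carcsinh (w z) with hAwdef
  have hwA : AnalyticAt ℂ w 0 := hwa 0 h0mem
  have hAw : AnalyticAt ℂ Aw 0 := by
    have h := carcsinh_analyticAt
    rw [← hw0] at h
    exact h.comp hwA
  have hAw0 : Aw 0 = 0 := by rw [hAwdef]; simp [hw0, carcsinh_zero]
  have hwd : HasDerivAt w (deriv w 0) 0 := hwA.differentiableAt.hasDerivAt
  have hAwd : HasDerivAt Aw (deriv w 0) 0 := by
    have h1 : HasDerivAt carcsinh 1 (w 0) := by rw [hw0]; exact carcsinh_hasDerivAt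
    exact (h1.comp 0 hwd).congr_deriv (one_mul _)
  have hAwderiv : deriv Aw 0 = deriv w 0 := hAwd.deriv
  have hAwOn : AnalyticOnNhd ℂ Aw {y | AnalyticAt ℂ Aw y} := fun y hy => hy
  have hdAw : AnalyticAt ℂ (deriv Aw) 0 := hAwOn.deriv 0 hAw
  have hdAwd : HasDerivAt (deriv Aw) (deriv (deriv Aw) 0) 0 := hdAw.differentiableAt.hasDerivAt
  have hfd : AnalyticOnNhd ℂ (deriv f) (ball 0 1) := hfa.deriv
  have hfdd : AnalyticOnNhd ℂ (deriv (deriv f)) (ball 0 1) := hfd.deriv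
  -- Step 3: equate second derivatives of both sides of the functional equation
  have hgh : (fun z => z * deriv f z) =ᶠ[nhds (0 : ℂ)] fun z => f z * (1 + Aw z) :=
    Filter.eventuallyEq_of_mem hBall_nhds heqn
  have hderiv_g : deriv (fun z => z * deriv f z) =ᶠ[nhds (0 : ℂ)]
      fun z => deriv f z + z * deriv (deriv f) z := by
    filter_upwards [hBall_nhds] with z hz
    have h1 : HasDerivAt (fun z : ℂ => z * deriv f z)
        (1 * deriv f z + z * deriv (deriv f) z) z :=
      (hasDerivAt_id z).mul ((hfd z hz).differentiableAt.hasDerivAt)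
    rw [h1.deriv]; ring
  have hEvAw : ∀ᶠ z in nhds (0 : ℂ), AnalyticAt ℂ Aw z := hAw.eventually_analyticAt
  have hderiv_h : deriv (fun z => f z * (1 + Aw z)) =ᶠ[nhds (0 : ℂ)]
      fun z => deriv f z * (1 + Aw z) + f z * deriv Aw z := by
    filter_upwards [hBall_nhds, hEvAw] with z hz hAz
    have h1 : HasDerivAt (fun z => f z * (1 + Aw z))
        (deriv f z * (1 + Aw z) + f z * (0 + deriv Aw z)) z :=
      ((hfa z hz).differentiableAt.hasDerivAt).mul
        ((hasDerivAt_const z (1 : ℂ)).add hAz.differentiableAt.hasDerivAt)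
    rw [h1.deriv]; ring
  have hkey : deriv (fun z => deriv f z + z * deriv (deriv f) z) 0
      = deriv (fun z => deriv f z * (1 + Aw z) + f z * deriv Aw z) 0 :=
    (hderiv_g.symm.trans ((hgh.deriv).trans hderiv_h)).deriv_eq
  have hL2 : HasDerivAt (fun z : ℂ => deriv f z + z * deriv (deriv f) z)
      (deriv (deriv f) 0 + (1 * deriv (deriv f) 0 + 0 * deriv (deriv (deriv f)) 0)) 0 :=
    ((hfd 0 h0mem).differentiableAt.hasDerivAt).add
      ((hasDerivAt_id 0).mul ((hfdd 0 h0mem).differentiableAt.hasDerivAt))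
  have hR2 : HasDerivAt (fun z => deriv f z * (1 + Aw z) + f z * deriv Aw z)
      ((deriv (deriv f) 0 * (1 + Aw 0) + deriv f 0 * (0 + deriv w 0))
        + (deriv f 0 * deriv Aw 0 + f 0 * deriv (deriv Aw) 0)) 0 :=
    (((hfd 0 h0mem).differentiableAt.hasDerivAt).mul
        ((hasDerivAt_const 0 (1 : ℂ)).add hAwd)).add
      (((hfa 0 h0mem).differentiableAt.hasDerivAt).mul hdAwd)
  have hmain : deriv (deriv f) 0 = 2 * deriv w 0 := by
    have hk := hkey
    rw [hL2.deriv, hR2.deriv, hAw0, hf1, hf0, hAwderiv] at hk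
    linear_combination hk
  have ha2 : a 2 = deriv w 0 := by
    have h2 : 2 * a 2 = 2 * deriv w 0 := by rw [← hd2, hmain]
    exact mul_left_cancel₀ (two_ne_zero) h2
  -- Step 4: Schwarz-type bound on deriv w 0
  have hbound : ‖deriv w 0‖ ≤ 1 := by
    have hslope : Filter.Tendsto (slope w 0) (nhdsWithin 0 {(0 : ℂ)}ᶜ) (nhds (deriv w 0)) :=
      hasDerivAt_iff_tendsto_slope.mp hwd
    have hev : ∀ᶠ z in nhdsWithin (0 : ℂ) {(0 : ℂ)}ᶜ, ‖slope w 0 z‖ ≤ 1 := by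
      filter_upwards [self_mem_nhdsWithin, mem_nhdsWithin_of_mem_nhds hBall_nhds]
        with z hz hzb
      have h1 : ‖w z‖ ≤ ‖z‖ := by
        simpa using hwb z hzb
      have hz0 : z ≠ 0 := hz
      rw [slope_def_field, hw0, sub_zero, sub_zero, norm_div,
        div_le_one (norm_pos_iff.mpr hz0)]
      exact h1
    exact le_of_tendsto hslope.norm hev
  rw [ha2]
  simpa using hbound
end

section
/- If f is in the class S*_ρ of starlike functions associated with the petal-shaped domain, with Taylor expansion f(z) = z + Σ_{n≥2} a_n z^n, then |a_3| ≤ 1/2. -/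
open Metric

/-- The complex absolute value, as an absolute value (the norm). -/
noncomputable def Complex.abs : AbsoluteValue ℂ ℝ where
  toFun := norm
  map_mul' := norm_mul
  nonneg' := norm_nonneg
  eq_zero' := fun _ => norm_eq_zero
  add_le' := norm_add_le

lemma Complex.norm_eq_abs (z : ℂ) : ‖z‖ = Complex.abs z := rfl

lemma Complex.sq_abs (z : ℂ) : Complex.abs z ^ 2 = Complex.normSq z := Complex.sq_norm z

lemma Complex.abs_ofReal (r : ℝ) : Complex.abs (r : ℂ) = |r| :=
  (Complex.norm_real r).trans (Real.norm_eq_abs r)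

lemma Complex.abs_conj (z : ℂ) : Complex.abs ((starRingEnd ℂ) z) = Complex.abs z :=
  Complex.norm_conj z

lemma Complex.abs_two : Complex.abs 2 = 2 := Complex.norm_two

lemma Complex.continuous_abs : Continuous Complex.abs := continuous_norm

lemma Complex.abs_deriv_le_one_of_mapsTo_ball {f : ℂ → ℂ} {c : ℂ} {R : ℝ}
    (hd : DifferentiableOn ℂ f (ball c R)) (h_maps : Set.MapsTo f (ball c R) (ball 0 R))
    (h₀ : f c = 0) (hR : 0 < R) : Complex.abs (deriv f c) ≤ 1 :=
  Complex.norm_deriv_le_one_of_mapsTo_ball hd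
    (fun z hz => by rw [h₀]; exact Metric.ball_subset_closedBall (h_maps hz)) hR


open Complex Filter Topology

lemma mobius_normSq (a ζ : ℂ) :
    Complex.normSq (1 - (starRingEnd ℂ) a * ζ) - Complex.normSq (ζ - a)
      = (1 - Complex.normSq a) * (1 - Complex.normSq ζ) := by
  have h : ∀ u : ℂ, (Complex.normSq u : ℂ) = u * (starRingEnd ℂ) u := by
    intro u; rw [Complex.mul_conj]
  have : (Complex.normSq (1 - (starRingEnd ℂ) a * ζ) : ℂ) - Complex.normSq (ζ - a)
      = ((1:ℂ) - Complex.normSq a) * (1 - Complex.normSq ζ) := by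
    simp only [h, map_sub, map_mul, map_one, Complex.conj_conj]
    ring
  exact_mod_cast this

lemma schwarzPick_deriv_zero {g : ℂ → ℂ}
    (hd : DifferentiableOn ℂ g (ball 0 1))
    (hb : ∀ z ∈ ball (0:ℂ) 1, Complex.abs (g z) ≤ 1) :
    Complex.abs (deriv g 0) ≤ 1 - Complex.abs (g 0) ^ 2 := by
  have h01 : (0:ℂ) ∈ ball (0:ℂ) 1 := by simp
  have key : ∀ t : ℝ, t ∈ Set.Ioo (0:ℝ) 1 →
      t * Complex.abs (deriv g 0) ≤ 1 - t ^ 2 * Complex.abs (g 0) ^ 2 := by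
    intro t ht
    set a : ℂ := (t : ℂ) * g 0 with ha_def
    have hat : Complex.abs a ≤ t := by
      rw [ha_def, map_mul, Complex.abs_ofReal, abs_of_pos ht.1]
      calc t * Complex.abs (g 0) ≤ t * 1 := by
            exact mul_le_mul_of_nonneg_left (hb 0 h01) ht.1.le
        _ = t := mul_one t
    have hat1 : Complex.abs a < 1 := lt_of_le_of_lt hat ht.2
    -- bound on |t * g z|
    have htg : ∀ z ∈ ball (0:ℂ) 1, Complex.abs ((t : ℂ) * g z) ≤ t := by
      intro z hz
      rw [map_mul, Complex.abs_ofReal, abs_of_pos ht.1]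
      calc t * Complex.abs (g z) ≤ t * 1 := mul_le_mul_of_nonneg_left (hb z hz) ht.1.le
        _ = t := mul_one t
    -- denominator nonzero
    have hden : ∀ z ∈ ball (0:ℂ) 1, 1 - (starRingEnd ℂ) a * ((t:ℂ) * g z) ≠ 0 := by
      intro z hz hcon
      have h1 : Complex.abs ((starRingEnd ℂ) a * ((t:ℂ) * g z)) < 1 := by
        rw [map_mul, Complex.abs_conj]
        calc Complex.abs a * Complex.abs ((t:ℂ) * g z) ≤ t * t := by
              exact mul_le_mul hat (htg z hz) (Complex.abs.nonneg _) ht.1.le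
          _ < 1 := by nlinarith [ht.1, ht.2]
      rw [sub_eq_zero] at hcon
      rw [← hcon] at h1
      simp at h1
    set h : ℂ → ℂ := fun z => ((t:ℂ) * g z - a) / (1 - (starRingEnd ℂ) a * ((t:ℂ) * g z))
      with hh_def
    have hdiff : DifferentiableOn ℂ h (ball 0 1) := by
      apply DifferentiableOn.div
      · exact ((differentiableOn_const _).mul hd).sub (differentiableOn_const _)
      · exact ((differentiableOn_const _).sub
          ((differentiableOn_const _).mul ((differentiableOn_const _).mul hd)))
      · exact hden
    have hmaps : Set.MapsTo h (ball 0 1) (ball 0 1) := by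
      intro z hz
      rw [mem_ball_zero_iff]
      have hineq := mobius_normSq a ((t:ℂ) * g z)
      have h1 : Complex.normSq a < 1 := by
        rw [← Complex.sq_abs]; nlinarith [hat1, Complex.abs.nonneg a]
      have h2 : Complex.normSq ((t:ℂ) * g z) < 1 := by
        rw [← Complex.sq_abs]
        nlinarith [htg z hz, ht.2, ht.1, Complex.abs.nonneg ((t:ℂ) * g z)]
      have hpos : 0 < Complex.normSq (1 - (starRingEnd ℂ) a * ((t:ℂ) * g z)) -
          Complex.normSq ((t:ℂ) * g z - a) := by
        rw [hineq]; nlinarith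
      have hnum : Complex.abs ((t:ℂ) * g z - a) ^ 2 <
          Complex.abs (1 - (starRingEnd ℂ) a * ((t:ℂ) * g z)) ^ 2 := by
        rw [Complex.sq_abs, Complex.sq_abs]; linarith
      have hdenpos : 0 < Complex.abs (1 - (starRingEnd ℂ) a * ((t:ℂ) * g z)) := by
        simpa [Complex.abs.pos_iff] using hden z hz
      have : Complex.abs ((t:ℂ) * g z - a) < Complex.abs (1 - (starRingEnd ℂ) a * ((t:ℂ) * g z)) := by
        nlinarith [Complex.abs.nonneg ((t:ℂ) * g z - a)]
      rw [hh_def]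
      simp only [norm_div, Complex.norm_eq_abs]
      rw [div_lt_one hdenpos]
      exact this
    have hzero : h 0 = 0 := by
      rw [hh_def]; simp [ha_def]
    have hschwarz : Complex.abs (deriv h 0) ≤ 1 :=
      Complex.abs_deriv_le_one_of_mapsTo_ball hdiff hmaps hzero one_pos
    -- compute deriv h 0
    have hg0 : HasDerivAt g (deriv g 0) 0 :=
      (hd.differentiableAt (ball_mem_nhds _ one_pos)).hasDerivAt
    have hnum : HasDerivAt (fun z => (t:ℂ) * g z - a) ((t:ℂ) * deriv g 0) 0 :=
      ((hg0.const_mul (t:ℂ)).sub_const a)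
    have hden' : HasDerivAt (fun z => 1 - (starRingEnd ℂ) a * ((t:ℂ) * g z))
        (-((starRingEnd ℂ) a * ((t:ℂ) * deriv g 0))) 0 := by
      simpa using (((hg0.const_mul (t:ℂ)).const_mul ((starRingEnd ℂ) a)).const_sub 1)
    have hd0 : (1 : ℂ) - (starRingEnd ℂ) a * ((t:ℂ) * g 0) ≠ 0 := hden 0 h01
    have hdh : HasDerivAt h
        (((t:ℂ) * deriv g 0 * (1 - (starRingEnd ℂ) a * ((t:ℂ) * g 0)) -
          ((t:ℂ) * g 0 - a) * -((starRingEnd ℂ) a * ((t:ℂ) * deriv g 0))) /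
          (1 - (starRingEnd ℂ) a * ((t:ℂ) * g 0)) ^ 2) 0 := hnum.div hden' hd0
    have hsub : (t:ℂ) * g 0 - a = 0 := by rw [ha_def]; ring
    have hval : deriv h 0 = (t:ℂ) * deriv g 0 / (1 - (starRingEnd ℂ) a * a) := by
      rw [hdh.deriv, hsub]
      have : (1:ℂ) - (starRingEnd ℂ) a * ((t:ℂ) * g 0) = 1 - (starRingEnd ℂ) a * a := by
        rw [ha_def]
      have hd1 : (1:ℂ) - (starRingEnd ℂ) a * a ≠ 0 := this ▸ hd0
      rw [this]
      rw [zero_mul, sub_zero, pow_two, ← div_div, mul_div_cancel_right₀ _ hd1]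
    -- abs computation
    have hconj : (starRingEnd ℂ) a * a = (Complex.normSq a : ℂ) := by
      rw [mul_comm, Complex.mul_conj]
    have hnsq : Complex.normSq a = t ^ 2 * Complex.abs (g 0) ^ 2 := by
      rw [← Complex.sq_abs, ha_def, map_mul, Complex.abs_ofReal, abs_of_pos ht.1]
      ring
    have habs : Complex.abs (deriv h 0) =
        t * Complex.abs (deriv g 0) / (1 - t ^ 2 * Complex.abs (g 0) ^ 2) := by
      rw [hval, hconj, hnsq]
      have h1 : Complex.normSq a ≤ t * t := by
        rw [← Complex.sq_abs]; nlinarith [hat, Complex.abs.nonneg a]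
      have hlt : t ^ 2 * Complex.abs (g 0) ^ 2 < 1 := by
        rw [← hnsq]; rw [← Complex.sq_abs]
        nlinarith [hat1, Complex.abs.nonneg a]
      rw [map_div₀, map_mul, Complex.abs_ofReal, abs_of_pos ht.1]
      congr 1
      have : ((1:ℂ) - (t ^ 2 * Complex.abs (g 0) ^ 2 : ℝ)) = ((1 - t ^ 2 * Complex.abs (g 0) ^ 2 : ℝ) : ℂ) := by
        push_cast; ring
      rw [this, Complex.abs_ofReal, abs_of_pos (by linarith)]
    have hlt : t ^ 2 * Complex.abs (g 0) ^ 2 < 1 := by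
      rw [← hnsq, ← Complex.sq_abs]
      nlinarith [hat1, Complex.abs.nonneg a]
    rw [habs, div_le_one (by linarith)] at hschwarz
    linarith
  -- limit as t → 1⁻
  have h1 : Tendsto (fun t : ℝ => t * Complex.abs (deriv g 0)) (𝓝[<] 1)
      (𝓝 (Complex.abs (deriv g 0))) := by
    have hc : Continuous (fun t : ℝ => t * Complex.abs (deriv g 0)) :=
      continuous_id.mul continuous_const
    have h3 := hc.tendsto (1:ℝ)
    simp only [one_mul] at h3
    exact h3.mono_left nhdsWithin_le_nhds
  have h2 : Tendsto (fun t : ℝ => 1 - t ^ 2 * Complex.abs (g 0) ^ 2) (𝓝[<] 1)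
      (𝓝 (1 - Complex.abs (g 0) ^ 2)) := by
    have : Continuous (fun t : ℝ => 1 - t ^ 2 * Complex.abs (g 0) ^ 2) := by continuity
    have h3 := this.tendsto (1:ℝ)
    simp only [one_pow, one_mul] at h3
    exact h3.mono_left nhdsWithin_le_nhds
  refine le_of_tendsto_of_tendsto h1 h2 ?_
  filter_upwards [Ioo_mem_nhdsLT_of_mem (Set.mem_Ioc.2 ⟨zero_lt_one, le_refl (1:ℝ)⟩)] with t ht
  exact key t ht



lemma AnalyticAt.deriv' {f : ℂ → ℂ} {x : ℂ} (h : AnalyticAt ℂ f x) :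
    AnalyticAt ℂ (deriv f) x := by
  have he := h.eventually_analyticAt
  rw [Filter.eventually_iff, _root_.mem_nhds_iff] at he
  obtain ⟨t, hts, hto, hxt⟩ := he
  exact (AnalyticOnNhd.deriv (fun y hy => hts hy)) x hxt

lemma carcsinh_comp_props {w : ℂ → ℂ} (hw : AnalyticAt ℂ w 0) (h0 : w 0 = 0) :
    AnalyticAt ℂ (fun z => carcsinh (w z)) 0 ∧ carcsinh (w 0) = 0 ∧
    deriv (fun z => carcsinh (w z)) 0 = deriv w 0 ∧
    deriv (deriv (fun z => carcsinh (w z))) 0 = deriv (deriv w) 0 := by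
  set S : ℂ → ℂ := fun z => Complex.exp (Complex.log (1 + w z ^ 2) * (1 / 2)) with hS_def
  -- basic eventual smallness of w
  have hwc : Tendsto w (𝓝 0) (𝓝 0) := by
    have := hw.continuousAt
    rwa [ContinuousAt, h0] at this
  have hsmall : ∀ᶠ z in 𝓝 0, Complex.abs (w z) < 1/4 := by
    have habs : Tendsto (fun z => Complex.abs (w z)) (𝓝 0) (𝓝 0) := by
      simpa [Function.comp_def] using (Complex.continuous_abs.tendsto 0).comp hwc
    exact habs.eventually_lt_const (by norm_num)
  have hslitA : ∀ᶠ z in 𝓝 0, (1 + w z ^ 2) ∈ Complex.slitPlane := by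
    filter_upwards [hsmall] with z hz
    apply Complex.mem_slitPlane_of_norm_lt_one
    rw [norm_pow, Complex.norm_eq_abs]
    nlinarith [Complex.abs.nonneg (w z)]
  have hAne : ∀ᶠ z in 𝓝 0, (1 + w z ^ 2) ≠ 0 := by
    filter_upwards [hslitA] with z hz
    exact Complex.slitPlane_ne_zero hz
  -- S is analytic at 0 with S 0 = 1
  have hA0 : (1 : ℂ) + w 0 ^ 2 = 1 := by simp [h0]
  have hAan : AnalyticAt ℂ (fun z => 1 + w z ^ 2) 0 :=
    analyticAt_const.add (hw.pow 2)
  have hlogan : AnalyticAt ℂ (fun z => Complex.log (1 + w z ^ 2)) 0 :=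
    hAan.clog (by simp [h0, Complex.slitPlane])
  have hSan : AnalyticAt ℂ S 0 :=
    (hlogan.mul analyticAt_const).cexp
  have hS0 : S 0 = 1 := by
    rw [hS_def]; simp [h0, Complex.log_one]
  have hSsmall : ∀ᶠ z in 𝓝 0, Complex.abs (S z - 1) < 1/4 := by
    have hc : Tendsto (fun z => S z - 1) (𝓝 0) (𝓝 0) := by
      have := hSan.continuousAt
      rw [ContinuousAt, hS0] at this
      simpa using (this.sub (tendsto_const_nhds (x := (1:ℂ))))
    have habs : Tendsto (fun z => Complex.abs (S z - 1)) (𝓝 0) (𝓝 0) := by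
      simpa [Function.comp_def] using (Complex.continuous_abs.tendsto 0).comp hc
    exact habs.eventually_lt_const (by norm_num)
  -- sigma
  set σ : ℂ → ℂ := fun z => w z + S z with hσ_def
  have hslitσ : ∀ᶠ z in 𝓝 0, σ z ∈ Complex.slitPlane := by
    filter_upwards [hsmall, hSsmall] with z h1 h2
    have : σ z = 1 + (w z + (S z - 1)) := by rw [hσ_def]; ring
    rw [this]
    apply Complex.mem_slitPlane_of_norm_lt_one
    calc ‖w z + (S z - 1)‖ ≤ ‖w z‖ + ‖S z - 1‖ := norm_add_le _ _
      _ < 1 := by rw [Complex.norm_eq_abs, Complex.norm_eq_abs]; linarith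
  have hσne : ∀ᶠ z in 𝓝 0, σ z ≠ 0 := by
    filter_upwards [hslitσ] with z hz
    exact Complex.slitPlane_ne_zero hz
  have hσan : AnalyticAt ℂ σ 0 := hw.add hSan
  have hσ0 : σ 0 = 1 := by rw [hσ_def]; simp [h0, hS0]
  -- carcsinh (w z) = log (σ z) eventually
  have hpsi_eq : (fun z => carcsinh (w z)) =ᶠ[𝓝 0] fun z => Complex.log (σ z) := by
    filter_upwards [hAne] with z hz
    rw [carcsinh, hσ_def]
    congr 2
    rw [Complex.cpow_def_of_ne_zero hz, hS_def]
  have hψ0 : carcsinh (w 0) = 0 := by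
    have := hpsi_eq.eq_of_nhds
    rw [this, hσ0, Complex.log_one]
  -- analyticity of ψ
  have hψan : AnalyticAt ℂ (fun z => carcsinh (w z)) 0 := by
    exact (hσan.clog (by rw [hσ0]; simp [Complex.slitPlane])).congr hpsi_eq.symm
  -- key algebraic identity: S z ^ 2 = 1 + w z ^ 2
  have hSsq : ∀ᶠ z in 𝓝 0, S z ^ 2 = 1 + w z ^ 2 := by
    filter_upwards [hAne] with z hz
    rw [hS_def]
    rw [← Complex.exp_nat_mul]
    push_cast
    rw [show (2:ℂ) * (Complex.log (1 + w z ^ 2) * (1/2)) = Complex.log (1 + w z ^ 2) by ring]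
    exact Complex.exp_log hz
  have hSne : ∀ z, S z ≠ 0 := fun z => Complex.exp_ne_zero _
  -- derivative of S
  have hwan : ∀ᶠ z in 𝓝 0, AnalyticAt ℂ w z := hw.eventually_analyticAt
  have hS' : ∀ᶠ z in 𝓝 0, HasDerivAt S (w z * deriv w z / S z) z := by
    filter_upwards [hwan, hslitA, hAne, hSsq] with z hza hslit hne hsq
    have hwz : HasDerivAt w (deriv w z) z := hza.differentiableAt.hasDerivAt
    have hA' : HasDerivAt (fun y => 1 + w y ^ 2) (2 * w z * deriv w z) z := by
      have := (hwz.pow 2).const_add (1:ℂ)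
      simpa [pow_one, mul_comm, mul_assoc, mul_left_comm] using this
    have hL' : HasDerivAt (fun y => Complex.log (1 + w y ^ 2))
        (2 * w z * deriv w z / (1 + w z ^ 2)) z := hA'.clog hslit
    have hM : HasDerivAt S (S z * (2 * w z * deriv w z / (1 + w z ^ 2) * (1 / 2))) z :=
      (hL'.mul_const ((1:ℂ)/2)).cexp
    convert hM using 1
    have e1 : S z * (2 * w z * deriv w z / (1 + w z ^ 2) * (1 / 2))
        = S z * (w z * deriv w z) / (1 + w z ^ 2) := by ring
    rw [e1, ← hsq, pow_two, mul_div_mul_left _ _ (hSne z)]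
  -- derivative of psi eventually
  have hψ' : deriv (fun z => carcsinh (w z)) =ᶠ[𝓝 0] fun z => deriv w z / S z := by
    have h1 : deriv (fun z => carcsinh (w z)) =ᶠ[𝓝 0] deriv (fun z => Complex.log (σ z)) :=
      hpsi_eq.deriv
    apply h1.trans
    filter_upwards [hwan, hS', hslitσ, hσne] with z hza hSz hslit hne
    have hwz : HasDerivAt w (deriv w z) z := hza.differentiableAt.hasDerivAt
    have hσ' : HasDerivAt σ (deriv w z + w z * deriv w z / S z) z := hwz.add hSz
    have hl : HasDerivAt (fun y => Complex.log (σ y))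
        ((deriv w z + w z * deriv w z / S z) / σ z) z := hσ'.clog hslit
    rw [hl.deriv]
    rw [hσ_def] at hne ⊢
    field_simp [hSne z]
    ring
  have hd1 : deriv (fun z => carcsinh (w z)) 0 = deriv w 0 := by
    rw [hψ'.eq_of_nhds, hS0]
    simp
  -- second derivative
  have hd2 : deriv (deriv (fun z => carcsinh (w z))) 0 = deriv (deriv w) 0 := by
    rw [hψ'.deriv_eq]
    have hw1 : HasDerivAt (deriv w) (deriv (deriv w) 0) 0 :=
      hw.deriv'.differentiableAt.hasDerivAt
    have hS0' : HasDerivAt S (w 0 * deriv w 0 / S 0) 0 := hS'.self_of_nhds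
    have hdiv : HasDerivAt (fun z => deriv w z / S z)
        ((deriv (deriv w) 0 * S 0 - deriv w 0 * (w 0 * deriv w 0 / S 0)) / S 0 ^ 2) 0 :=
      hw1.div hS0' (hSne 0)
    rw [hdiv.deriv, h0, hS0]
    simp
  exact ⟨hψan, hψ0, hd1, hd2⟩

theorem abs_a3_le_half (f : ℂ → ℂ) (a : ℕ → ℂ) (hf : InStarRho f)
    (ha0 : a 0 = 0) (ha1 : a 1 = 1)
    (hrep : ∀ z ∈ ball (0 : ℂ) 1, HasSum (fun n : ℕ => a n * z ^ n) (f z)) :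
    ‖a 3‖ ≤ 1 / 2 := by
  obtain ⟨hfa, hf0, hf'0, w, hwa, hw0, hwb, heq⟩ := hf
  -- power series of f with coefficients a
  have hcoeff : ∀ n, (FormalMultilinearSeries.ofScalars ℂ a).coeff n = a n := by
    intro n
    rw [FormalMultilinearSeries.coeff,
      show (1 : Fin n → ℂ) = fun _ => (1:ℂ) from rfl,
      FormalMultilinearSeries.ofScalars_apply_eq]
    simp
  have hp : HasFPowerSeriesAt f (FormalMultilinearSeries.ofScalars ℂ a) 0 := by
    rw [hasFPowerSeriesAt_iff]
    filter_upwards [ball_mem_nhds (0:ℂ) one_pos] with z hz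
    simp only [hcoeff, smul_eq_mul, zero_add]
    simpa [mul_comm] using hrep z hz
  set Q := dslope f 0 with hQdef
  have hq : HasFPowerSeriesAt Q (FormalMultilinearSeries.ofScalars ℂ a).fslope 0 :=
    hp.has_fpower_series_dslope_fslope
  set R := dslope Q 0 with hRdef
  have hr : HasFPowerSeriesAt R (FormalMultilinearSeries.ofScalars ℂ a).fslope.fslope 0 :=
    hq.has_fpower_series_dslope_fslope
  have hQ0 : Q 0 = 1 := by rw [hQdef, dslope_same, hf'0]
  have ha3 : deriv R 0 = a 3 := by
    rw [hr.deriv]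
    have h1 : (FormalMultilinearSeries.ofScalars ℂ a).fslope.fslope.coeff 1 = a 3 := by
      rw [FormalMultilinearSeries.coeff_fslope, FormalMultilinearSeries.coeff_fslope]
      exact hcoeff 3
    exact h1
  -- global factorizations
  have f_eq : ∀ z, f z = z * Q z := by
    intro z
    rcases eq_or_ne z 0 with rfl | hz
    · simp [hf0]
    · rw [hQdef, dslope_of_ne f hz, slope_def_field, hf0, sub_zero, sub_zero]
      field_simp
  have Q_eq : ∀ z, Q z = 1 + z * R z := by
    intro z
    rcases eq_or_ne z 0 with rfl | hz
    · simp [hQ0]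
    · rw [hRdef, dslope_of_ne Q hz, slope_def_field, hQ0, sub_zero]
      field_simp
      ring
  -- the Schwarz function quotient G
  have hwa0 : AnalyticAt ℂ w 0 := hwa 0 (by simp)
  obtain ⟨pw, hpw⟩ := hwa0
  have hwa0 : AnalyticAt ℂ w 0 := ⟨pw, hpw⟩
  set G := dslope w 0 with hGdef
  have hG : HasFPowerSeriesAt G pw.fslope 0 := hpw.has_fpower_series_dslope_fslope
  have hGan : AnalyticAt ℂ G 0 := hG.analyticAt
  have hG0 : G 0 = deriv w 0 := dslope_same w 0
  have w_eq : ∀ z, w z = z * G z := by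
    intro z
    rcases eq_or_ne z 0 with rfl | hz
    · simp [hw0]
    · rw [hGdef, dslope_of_ne w hz, slope_def_field, hw0, sub_zero, sub_zero]
      field_simp
  -- properties of ψ = arcsinh ∘ w
  obtain ⟨hψan, hψ0, hψd1, hψd2⟩ := carcsinh_comp_props hwa0 hw0
  have hQan : AnalyticAt ℂ Q 0 := hq.analyticAt
  have hRan : AnalyticAt ℂ R 0 := hr.analyticAt
  -- the fundamental equation as a germ at 0
  have heqev : ∀ᶠ z in 𝓝 (0:ℂ), z * deriv f z = f z * (1 + carcsinh (w z)) :=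
    Filter.eventually_of_mem (ball_mem_nhds (0:ℂ) one_pos) heq
  have hQev := hQan.eventually_analyticAt
  have hψev := hψan.eventually_analyticAt
  have hderivf : ∀ᶠ z in 𝓝 (0:ℂ), deriv f z = Q z + z * deriv Q z := by
    filter_upwards [hQev] with z hz
    have h1 : HasDerivAt (fun y => y * Q y) (1 * Q z + z * deriv Q z) z :=
      (hasDerivAt_id z).mul hz.differentiableAt.hasDerivAt
    rw [funext f_eq, h1.deriv]; ring
  have E : (fun z => z * deriv Q z) =ᶠ[𝓝 (0:ℂ)] fun z => Q z * carcsinh (w z) := by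
    filter_upwards [heqev, hderivf] with z h1 h2
    rcases eq_or_ne z 0 with rfl | hz
    · simp [hψ0]
    · rw [h2, f_eq z] at h1
      have h3 : Q z + z * deriv Q z = Q z * (1 + carcsinh (w z)) := by
        apply mul_left_cancel₀ hz
        exact h1.trans (by ring)
      linear_combination h3
  -- first derivative of the equation
  have hQ'ev := hQan.deriv'.eventually_analyticAt
  have hψ'ev := hψan.deriv'.eventually_analyticAt
  have hL1 : deriv (fun z => z * deriv Q z) =ᶠ[𝓝 (0:ℂ)]
      fun z => deriv Q z + z * deriv (deriv Q) z := by
    filter_upwards [hQ'ev] with z hz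
    have h1 : HasDerivAt (fun y => y * deriv Q y) (1 * deriv Q z + z * deriv (deriv Q) z) z :=
      (hasDerivAt_id z).mul hz.differentiableAt.hasDerivAt
    rw [h1.deriv]; ring
  have hR1 : deriv (fun z => Q z * carcsinh (w z)) =ᶠ[𝓝 (0:ℂ)]
      fun z => deriv Q z * carcsinh (w z) + Q z * deriv (fun y => carcsinh (w y)) z := by
    filter_upwards [hQev, hψev] with z h1 h2
    exact (h1.differentiableAt.hasDerivAt.mul h2.differentiableAt.hasDerivAt).deriv
  have E1 : (fun z => deriv Q z + z * deriv (deriv Q) z) =ᶠ[𝓝 (0:ℂ)]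
      fun z => deriv Q z * carcsinh (w z) + Q z * deriv (fun y => carcsinh (w y)) z :=
    hL1.symm.trans ((Filter.EventuallyEq.deriv E).trans hR1)
  have hval1 : deriv Q 0 = deriv (fun y => carcsinh (w y)) 0 := by
    have h5 := E1.eq_of_nhds
    simp only [zero_mul, add_zero, hψ0, mul_zero, hQ0, one_mul, zero_add] at h5
    exact h5
  -- second derivative of the equation
  have hL2 : deriv (fun z => deriv Q z + z * deriv (deriv Q) z) =ᶠ[𝓝 (0:ℂ)]
      fun z => 2 * deriv (deriv Q) z + z * deriv (deriv (deriv Q)) z := by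
    filter_upwards [hQ'ev, hQan.deriv'.deriv'.eventually_analyticAt] with z h1 h2
    have hd2 : HasDerivAt (fun y => y * deriv (deriv Q) y)
        (1 * deriv (deriv Q) z + z * deriv (deriv (deriv Q)) z) z :=
      (hasDerivAt_id z).mul h2.differentiableAt.hasDerivAt
    have h3 := (h1.differentiableAt.hasDerivAt.add hd2)
    exact h3.deriv.trans (by ring)
  have hR2 : deriv (fun z => deriv Q z * carcsinh (w z) + Q z * deriv (fun y => carcsinh (w y)) z)
      =ᶠ[𝓝 (0:ℂ)] fun z => deriv (deriv Q) z * carcsinh (w z)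
        + deriv Q z * deriv (fun y => carcsinh (w y)) z
        + (deriv Q z * deriv (fun y => carcsinh (w y)) z
        + Q z * deriv (deriv (fun y => carcsinh (w y))) z) := by
    filter_upwards [hQev, hψev, hQ'ev, hψ'ev] with z h1 h2 h3 h4
    have hA : HasDerivAt (fun y => deriv Q y * carcsinh (w y))
        (deriv (deriv Q) z * carcsinh (w z) + deriv Q z * deriv (fun y => carcsinh (w y)) z) z :=
      h3.differentiableAt.hasDerivAt.mul h2.differentiableAt.hasDerivAt
    have hB : HasDerivAt (fun y => Q y * deriv (fun y' => carcsinh (w y')) y)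
        (deriv Q z * deriv (fun y => carcsinh (w y)) z
          + Q z * deriv (deriv (fun y => carcsinh (w y))) z) z :=
      h1.differentiableAt.hasDerivAt.mul h4.differentiableAt.hasDerivAt
    exact (hA.add hB).deriv
  have E2 := hL2.symm.trans ((Filter.EventuallyEq.deriv E1).trans hR2)
  have hval2 : 2 * deriv (deriv Q) 0 =
      2 * deriv (fun y => carcsinh (w y)) 0 ^ 2 + deriv (deriv (fun y => carcsinh (w y))) 0 := by
    have h5 := E2.eq_of_nhds
    simp only [zero_mul, add_zero, hψ0, mul_zero, hQ0, one_mul, zero_add] at h5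
    rw [hval1] at h5
    linear_combination h5
  -- deriv (deriv Q) 0 = 2 * deriv R 0
  have hQ1 : deriv Q =ᶠ[𝓝 (0:ℂ)] fun z => R z + z * deriv R z := by
    filter_upwards [hRan.eventually_analyticAt] with z hz
    have h1 : HasDerivAt (fun y => (1:ℂ) + y * R y) (0 + (1 * R z + z * deriv R z)) z :=
      (hasDerivAt_const z 1).add ((hasDerivAt_id z).mul hz.differentiableAt.hasDerivAt)
    rw [funext Q_eq, h1.deriv]; ring
  have hQ2 : deriv (deriv Q) 0 = 2 * deriv R 0 := by
    rw [hQ1.deriv_eq]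
    have h2 : HasDerivAt (fun z => R z + z * deriv R z)
        (deriv R 0 + (1 * deriv R 0 + 0 * deriv (deriv R) 0)) 0 :=
      hRan.differentiableAt.hasDerivAt.add
        ((hasDerivAt_id 0).mul (hRan.deriv'.differentiableAt.hasDerivAt))
    rw [h2.deriv]; ring
  -- deriv (deriv w) 0 = 2 * deriv G 0
  have hwd2 : deriv (deriv w) 0 = 2 * deriv G 0 := by
    have hG1 : deriv w =ᶠ[𝓝 (0:ℂ)] fun z => G z + z * deriv G z := by
      filter_upwards [hGan.eventually_analyticAt] with z hz
      have h1 : HasDerivAt (fun y => y * G y) (1 * G z + z * deriv G z) z :=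
        (hasDerivAt_id z).mul hz.differentiableAt.hasDerivAt
      rw [funext w_eq, h1.deriv]; ring
    rw [hG1.deriv_eq]
    have h2 : HasDerivAt (fun z => G z + z * deriv G z)
        (deriv G 0 + (1 * deriv G 0 + 0 * deriv (deriv G) 0)) 0 :=
      hGan.differentiableAt.hasDerivAt.add
        ((hasDerivAt_id 0).mul (hGan.deriv'.differentiableAt.hasDerivAt))
    rw [h2.deriv]; ring
  -- assemble the coefficient formula
  have key : a 3 = G 0 ^ 2 / 2 + deriv G 0 / 2 := by
    rw [← ha3]
    have e1 : deriv (fun y => carcsinh (w y)) 0 = G 0 := by rw [hψd1, hG0]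
    have e2 : deriv (deriv (fun y => carcsinh (w y))) 0 = 2 * deriv G 0 := by
      rw [hψd2, hwd2]
    rw [hQ2, e1, e2] at hval2
    linear_combination hval2 / 4
  -- Schwarz bound for G
  have hGbd' : ∀ z ∈ ball (0:ℂ) 1, z ≠ 0 → Complex.abs (G z) ≤ 1 := by
    intro z hz hzne
    have h1 := hwb z hz
    rw [w_eq z, norm_mul] at h1
    change Complex.abs z * Complex.abs (G z) ≤ Complex.abs z at h1
    have hzpos : 0 < Complex.abs z := by
      simpa [Complex.abs.pos_iff] using hzne
    nlinarith [Complex.abs.nonneg (G z)]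
  have hGbd : ∀ z ∈ ball (0:ℂ) 1, Complex.abs (G z) ≤ 1 := by
    intro z hz
    rcases eq_or_ne z 0 with rfl | hzne
    · have ht : Filter.Tendsto G (𝓝[≠] (0:ℂ)) (𝓝 (G 0)) :=
        hGan.continuousAt.continuousWithinAt
      have habs : Filter.Tendsto (fun y => Complex.abs (G y)) (𝓝[≠] (0:ℂ))
          (𝓝 (Complex.abs (G 0))) := (Complex.continuous_abs.tendsto _).comp ht
      apply le_of_tendsto habs
      filter_upwards [self_mem_nhdsWithin,
        eventually_nhdsWithin_of_eventually_nhds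
          (Filter.eventually_of_mem (ball_mem_nhds (0:ℂ) one_pos) (fun y hy => hy))] with y h1 h2
      exact hGbd' y h2 h1
    · exact hGbd' z hz hzne
  have hGdiff : DifferentiableOn ℂ G (ball 0 1) := by
    intro z hz
    rcases eq_or_ne z 0 with rfl | hzne
    · exact hGan.differentiableAt.differentiableWithinAt
    · have hz' : (fun y => w y / y) =ᶠ[𝓝 z] G := by
        filter_upwards [compl_singleton_mem_nhds hzne] with y hy
        have hyne : y ≠ 0 := hy
        rw [w_eq y]
        field_simp
      have hdiff : DifferentiableAt ℂ (fun y => w y / y) z :=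
        ((hwa z hz).differentiableAt).div differentiableAt_id hzne
      exact (hz'.differentiableAt_iff.mp hdiff).differentiableWithinAt
  have hSP := schwarzPick_deriv_zero hGdiff hGbd
  -- final estimate
  have hbound : Complex.abs (a 3) ≤ Complex.abs (G 0) ^ 2 / 2 + Complex.abs (deriv G 0) / 2 := by
    rw [key]
    calc Complex.abs (G 0 ^ 2 / 2 + deriv G 0 / 2)
        ≤ Complex.abs (G 0 ^ 2 / 2) + Complex.abs (deriv G 0 / 2) := Complex.abs.add_le _ _
      _ = Complex.abs (G 0) ^ 2 / 2 + Complex.abs (deriv G 0) / 2 := by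
          simp [map_div₀, map_pow, Complex.abs_two]
  show Complex.abs (a 3) ≤ 1 / 2
  linarith
end

section
/- If p is in the Carathéodory class P with Taylor expansion p(z) = 1 + Σ_{n≥1} p_n z^n, then |p_1⁴ − 3 p_1² p_2 + p_2² + 2 p_1 p_3 − p_4| ≤ 2. -/
open Metric

open Complex FormalMultilinearSeries intervalIntegral

lemma summable_norm_coeff_mul {a : ℕ → ℂ} {ρ : ℝ} {f : ℂ → ℂ}
    (h : ∀ z ∈ ball (0:ℂ) ρ, HasSum (fun n => a n * z ^ n) (f z))
    {z : ℂ} (hz : ‖z‖ < ρ) : Summable (fun n => ‖a n * z ^ n‖) := by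
  set t : ℝ := (‖z‖ + ρ) / 2 with ht
  have h0z : (0:ℝ) ≤ ‖z‖ := norm_nonneg _
  have ht1 : ‖z‖ < t := by rw [ht]; linarith
  have ht2 : t < ρ := by rw [ht]; linarith
  have ht0 : 0 < t := lt_of_le_of_lt h0z ht1
  have hmem : (t:ℂ) ∈ ball (0:ℂ) ρ := by
    simp only [mem_ball, dist_zero_right, Complex.norm_real, Real.norm_eq_abs,
      abs_of_pos ht0]
    exact ht2
  have hsum := (h _ hmem).summable
  have htend : Filter.Tendsto (fun n => ‖a n * (t:ℂ) ^ n‖) Filter.atTop (nhds 0) :=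
    by simpa using hsum.tendsto_atTop_zero.norm
  obtain ⟨C, hC⟩ := htend.bddAbove_range
  have hCle : ∀ n, ‖a n * (t:ℂ) ^ n‖ ≤ C := fun n => hC ⟨n, rfl⟩
  have hgeo : Summable (fun n : ℕ => C * (‖z‖ / t) ^ n) := by
    apply Summable.mul_left
    exact summable_geometric_of_lt_one (by positivity) (by rw [div_lt_one ht0]; exact ht1)
  apply Summable.of_nonneg_of_le (fun n => norm_nonneg _) _ hgeo
  intro n
  have : ‖a n * z ^ n‖ = ‖a n * (t:ℂ) ^ n‖ * (‖z‖ / t) ^ n := by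
    rw [norm_mul, norm_mul, norm_pow, norm_pow, Complex.norm_real, Real.norm_eq_abs,
      abs_of_pos ht0]
    field_simp
    rw [mul_assoc, ← mul_pow, ]
    congr 2
    field_simp
  rw [this]
  exact mul_le_mul_of_nonneg_right (hCle n) (by positivity)

lemma ofScalars_coeff (a : ℕ → ℂ) (n : ℕ) : (ofScalars ℂ a).coeff n = a n := by
  rw [FormalMultilinearSeries.coeff, show (1 : Fin n → ℂ) = fun _ => (1:ℂ) from rfl,
    ofScalars_apply_eq]
  simp

lemma hasFPowerSeriesAt_of_rep {a : ℕ → ℂ} {ρ : ℝ} (hρ : 0 < ρ) {f : ℂ → ℂ}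
    (h : ∀ z ∈ ball (0:ℂ) ρ, HasSum (fun n => a n * z ^ n) (f z)) :
    HasFPowerSeriesAt f (ofScalars ℂ a) 0 := by
  refine ⟨ENNReal.ofReal ρ, ?_, by simp [hρ], ?_⟩
  · -- radius bound
    apply ENNReal.le_of_forall_nnreal_lt
    intro r hr
    have hrρ : (r : ℝ) < ρ := by
      have := ENNReal.toReal_strict_mono (by simp) hr
      simpa [ENNReal.toReal_ofReal hρ.le] using this
    apply FormalMultilinearSeries.le_radius_of_summable
    have hs := summable_norm_coeff_mul h (z := (r:ℝ)) (by simpa [_root_.abs_of_nonneg r.2] using hrρ)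
    apply hs.congr
    intro n
    rw [ofScalars_norm, norm_mul, norm_pow]
    norm_num
  · intro y hy
    rw [Metric.emetric_ball] at hy
    have := h y (by simpa using hy)
    simpa [ofScalars_coeff, smul_eq_mul, mul_comm] using this

lemma rep_mul {a b : ℕ → ℂ} {ρ : ℝ} {f g : ℂ → ℂ}
    (ha : ∀ z ∈ ball (0:ℂ) ρ, HasSum (fun n => a n * z ^ n) (f z))
    (hb : ∀ z ∈ ball (0:ℂ) ρ, HasSum (fun n => b n * z ^ n) (g z)) :
    ∀ z ∈ ball (0:ℂ) ρ, HasSum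
      (fun n => (∑ k ∈ Finset.range (n+1), a k * b (n-k)) * z ^ n) (f z * g z) := by
  intro z hz
  rw [mem_ball, dist_zero_right] at hz
  have Sa := summable_norm_coeff_mul ha hz
  have Sb := summable_norm_coeff_mul hb hz
  have H := hasSum_sum_range_mul_of_summable_norm Sa Sb
  rw [(ha z (by simpa [mem_ball, dist_zero_right] using hz)).tsum_eq,
    (hb z (by simpa [mem_ball, dist_zero_right] using hz)).tsum_eq] at H
  apply H.congr_fun
  intro n
  rw [Finset.sum_mul]
  apply Finset.sum_congr rfl
  intro k hk
  have hk' : k ≤ n := Nat.lt_succ_iff.mp (Finset.mem_range.mp hk)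
  have : z ^ k * z ^ (n - k) = z ^ n := by
    rw [← pow_add]
    congr 1
    omega
  calc a k * b (n-k) * z ^ n = a k * b (n-k) * (z ^ k * z ^ (n-k)) := by rw [this]
    _ = a k * z ^ k * (b (n - k) * z ^ (n - k)) := by ring

lemma conj_intervalIntegral (h : ℝ → ℂ) (a b : ℝ) :
    (starRingEnd ℂ) (∫ θ in a..b, h θ) = ∫ θ in a..b, (starRingEnd ℂ) (h θ) := by
  rw [intervalIntegral, intervalIntegral, map_sub, integral_conj, integral_conj]

lemma coeff_bound_aux (q : ℂ → ℂ) (hqa : AnalyticOnNhd ℂ q (ball (0:ℂ) 1)) (hq0 : q 0 = 1)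
    (hre : ∀ z ∈ ball (0:ℂ) 1, 0 ≤ (q z).re) (Q : FormalMultilinearSeries ℂ ℂ ℂ)
    (hQ : HasFPowerSeriesAt q Q 0) (n : ℕ) (hn : 1 ≤ n) (r : NNReal) (hr0 : 0 < r)
    (hr1 : (r:ℝ) < 1) : ‖Q.coeff n‖ * (r:ℝ) ^ n ≤ 2 := by
  have hrR : (0:ℝ) < r := hr0
  have hrne : (r:ℂ) ≠ 0 := by
    simp only [ne_eq, Complex.ofReal_eq_zero]
    exact ne_of_gt hrR
  -- membership of the circle in the unit ball
  have hmem : ∀ θ : ℝ, circleMap 0 r θ ∈ ball (0:ℂ) 1 := by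
    intro θ
    simp only [mem_ball, dist_zero_right, norm_circleMap_zero,
      abs_of_pos hrR]
    exact hr1
  have hsub : closedBall (0:ℂ) r ⊆ ball (0:ℂ) 1 := by
    apply closedBall_subset_ball
    exact hr1
  -- q is differentiable on the closed ball
  have hdiff : DifferentiableOn ℂ q (closedBall (0:ℂ) r) :=
    (hqa.differentiableOn).mono hsub
  have hb : HasFPowerSeriesOnBall q (cauchyPowerSeries q 0 r) 0 r :=
    hdiff.hasFPowerSeriesOnBall hr0
  have hQr : Q = cauchyPowerSeries q 0 (r:ℝ) :=
    hQ.eq_formalMultilinearSeries hb.hasFPowerSeriesAt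
  -- basic functions
  set e : ℝ → ℂ := fun θ => Complex.exp (θ * Complex.I) with he
  set g : ℝ → ℂ := fun θ => q (circleMap 0 r θ) with hg
  have henz : ∀ θ, e θ ≠ 0 := fun θ => Complex.exp_ne_zero _
  have hcm : ∀ θ : ℝ, circleMap 0 (r:ℝ) θ = (r:ℂ) * e θ := fun θ => circleMap_zero r θ
  have hgc : Continuous g := by
    apply (hqa.continuousOn).comp_continuous (continuous_circleMap 0 r)
    exact hmem
  have hec : Continuous e := by
    apply Complex.continuous_exp.comp
    exact (Complex.continuous_ofReal).mul continuous_const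
  have heabs : ∀ θ : ℝ, ‖e θ‖ = 1 := by
    intro θ
    rw [he]
    simp [Complex.norm_exp]
  -- the integrals
  set K : ℕ → ℂ := fun m => ∫ θ in (0:ℝ)..(2*Real.pi), (e θ)⁻¹ ^ m * g θ with hK
  set L : ℕ → ℂ := fun m => ∫ θ in (0:ℝ)..(2*Real.pi), (e θ) ^ m * g θ with hL
  -- integrability
  have hint : ∀ h : ℝ → ℂ, Continuous h →
      IntervalIntegrable h MeasureTheory.volume 0 (2*Real.pi) := fun h hc =>
    hc.intervalIntegrable _ _
  -- (A) : K m = 2π r^m coeff m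
  have hA : ∀ m : ℕ, Complex.I * K m = Q.coeff m * (2 * ↑Real.pi * Complex.I) * (r:ℂ) ^ m := by
    intro m
    simp only [hK]
    have h1 : Q.coeff m = cauchyPowerSeries q 0 (r:ℝ) m (fun _ => (1:ℂ)) := by
      rw [hQr]; rfl
    rw [cauchyPowerSeries_apply] at h1
    rw [circleIntegral] at h1
    simp only [deriv_circleMap, smul_eq_mul, sub_zero] at h1
    have h2 : ∀ θ : ℝ, circleMap 0 (r:ℝ) θ * Complex.I *
        ((1 / circleMap 0 (r:ℝ) θ) ^ m * ((circleMap 0 (r:ℝ) θ)⁻¹ * q (circleMap 0 (r:ℝ) θ)))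
        = (Complex.I * ((r:ℂ)⁻¹)^m) * ((e θ)⁻¹ ^ m * g θ) := by
      intro θ
      rw [hcm θ, hg]
      simp only [hcm θ]
      rw [one_div, mul_inv]
      have h3 : (↑r:ℂ) * e θ * ((↑r:ℂ)⁻¹ * (e θ)⁻¹) = 1 := by
        rw [← mul_inv]
        exact mul_inv_cancel₀ (mul_ne_zero hrne (henz θ))
      linear_combination (Complex.I * q ((r:ℂ)*e θ) * ((r:ℂ))⁻¹^m * (e θ)⁻¹^m) * h3
    rw [intervalIntegral.integral_congr (g := fun θ => (Complex.I * ((r:ℂ)⁻¹)^m) * ((e θ)⁻¹ ^ m * g θ)) (fun θ _ => h2 θ)] at h1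
    rw [intervalIntegral.integral_const_mul] at h1
    rw [h1]
    have hI : (2 * (Real.pi:ℂ) * Complex.I) ≠ 0 := by
      simp [Real.pi_ne_zero, Complex.I_ne_zero]
    field_simp
    rw [mul_assoc, ← mul_pow, one_div_mul_cancel hrne, one_pow, mul_one]
  have hB : L n = 0 := by
    simp only [hL]
    obtain ⟨k, hkn⟩ : ∃ k, n = k + 1 := ⟨n - 1, by omega⟩
    subst hkn
    have hcz : (∮ z in C((0:ℂ), (r:ℝ)), z ^ k * q z) = 0 := by
      apply circleIntegral_eq_zero_of_differentiable_on_off_countable hrR.le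
        Set.countable_empty
      · exact (continuousOn_pow k).mul ((hqa.continuousOn).mono hsub)
      · intro z hz
        have hz1 : z ∈ ball (0:ℂ) 1 := hsub (ball_subset_closedBall hz.1)
        exact (differentiableAt_pow k).mul ((hqa z hz1).differentiableAt)
    rw [circleIntegral] at hcz
    simp only [deriv_circleMap, smul_eq_mul] at hcz
    have h2 : ∀ θ : ℝ, circleMap 0 (r:ℝ) θ * Complex.I *
        ((circleMap 0 (r:ℝ) θ) ^ k * q (circleMap 0 (r:ℝ) θ))
        = (Complex.I * (r:ℂ)^(k+1)) * ((e θ) ^ (k+1) * g θ) := by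
      intro θ
      rw [hcm θ, hg]
      simp only [hcm θ]
      ring
    rw [intervalIntegral.integral_congr
      (g := fun θ => (Complex.I * (r:ℂ)^(k+1)) * ((e θ) ^ (k+1) * g θ)) (fun θ _ => h2 θ)] at hcz
    rw [intervalIntegral.integral_const_mul] at hcz
    have hne : (Complex.I * (r:ℂ)^(k+1)) ≠ 0 :=
      mul_ne_zero Complex.I_ne_zero (pow_ne_zero _ hrne)
    exact (mul_eq_zero.mp hcz).resolve_left hne
  -- (C) : K n = ∫ (e θ)⁻¹^n * (2 * re (g θ))
  have hconj : ∀ θ : ℝ, (starRingEnd ℂ) (e θ) = (e θ)⁻¹ := by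
    intro θ
    rw [he]
    simp only []
    rw [← Complex.exp_conj, ← Complex.exp_neg]
    congr 1
    simp [Complex.conj_I]
  have hcont1 : Continuous (fun θ => (e θ)⁻¹ ^ n * g θ) :=
    ((hec.inv₀ henz).pow n).mul hgc
  have hcont2 : Continuous (fun θ => (e θ)⁻¹ ^ n * (starRingEnd ℂ) (g θ)) :=
    ((hec.inv₀ henz).pow n).mul (Complex.continuous_conj.comp hgc)
  have hC : K n = ∫ θ in (0:ℝ)..(2*Real.pi), (e θ)⁻¹ ^ n * (2 * ((g θ).re : ℂ)) := by
    have hLconj : (0:ℂ) = ∫ θ in (0:ℝ)..(2*Real.pi), (e θ)⁻¹ ^ n * (starRingEnd ℂ) (g θ) := by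
      have hB' : (∫ θ in (0:ℝ)..(2*Real.pi), e θ ^ n * g θ) = 0 := hB
      have := conj_intervalIntegral (fun θ => (e θ) ^ n * g θ) 0 (2*Real.pi)
      rw [hB'] at this
      simp only [map_zero] at this
      rw [this]
      apply intervalIntegral.integral_congr
      intro θ _
      simp [map_mul, map_pow, hconj θ]
    calc K n = K n + ∫ θ in (0:ℝ)..(2*Real.pi), (e θ)⁻¹ ^ n * (starRingEnd ℂ) (g θ) := by
          rw [← hLconj]; ring
      _ = ∫ θ in (0:ℝ)..(2*Real.pi),
            ((e θ)⁻¹ ^ n * g θ + (e θ)⁻¹ ^ n * (starRingEnd ℂ) (g θ)) := by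
          simp only [hK]
          rw [intervalIntegral.integral_add (hint _ hcont1) (hint _ hcont2)]
      _ = _ := by
          apply intervalIntegral.integral_congr
          intro θ _
          show (e θ)⁻¹ ^ n * g θ + (e θ)⁻¹ ^ n * (starRingEnd ℂ) (g θ)
              = (e θ)⁻¹ ^ n * (2 * ((g θ).re : ℂ))
          rw [← mul_add]
          congr 1
          rw [Complex.add_conj]
          push_cast
          ring
  -- (D) : ‖K n‖ ≤ 4π
  have hgre : ∀ θ : ℝ, 0 ≤ (g θ).re := fun θ => hre _ (hmem θ)
  have hQ0 : Q.coeff 0 = 1 := by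
    have := hQ.coeff_zero (fun _ => (1:ℂ))
    rw [hq0] at this
    exact this
  have hK0 : K 0 = 2 * Real.pi := by
    have h := hA 0
    rw [hQ0] at h
    simp only [pow_zero, mul_one] at h
    have h' : Complex.I * K 0 = Complex.I * (2 * Real.pi) := by
      rw [h]; ring
    exact mul_left_cancel₀ Complex.I_ne_zero h'
  have hre2 : (∫ θ in (0:ℝ)..(2*Real.pi), (g θ).re) = 2 * Real.pi := by
    have hcc := (Complex.reCLM).intervalIntegral_comp_comm (hint g hgc)
      (a := 0) (b := 2*Real.pi)
    simp only [Complex.reCLM_apply] at hcc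
    have : K 0 = ∫ θ in (0:ℝ)..(2*Real.pi), g θ := by
      simp only [hK]
      apply intervalIntegral.integral_congr
      intro θ _
      simp
    rw [← this, hK0] at hcc
    simpa using hcc
  have hD : ‖K n‖ ≤ 4 * Real.pi := by
    rw [hC]
    have hb1 : ‖∫ θ in (0:ℝ)..(2*Real.pi), (e θ)⁻¹ ^ n * (2 * ((g θ).re : ℂ))‖ ≤
        ∫ θ in (0:ℝ)..(2*Real.pi), ‖(e θ)⁻¹ ^ n * (2 * ((g θ).re : ℂ))‖ :=
      intervalIntegral.norm_integral_le_integral_norm (by positivity)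
    have hb2 : (∫ θ in (0:ℝ)..(2*Real.pi), ‖(e θ)⁻¹ ^ n * (2 * ((g θ).re : ℂ))‖)
        = ∫ θ in (0:ℝ)..(2*Real.pi), 2 * (g θ).re := by
      apply intervalIntegral.integral_congr
      intro θ _
      show ‖(e θ)⁻¹ ^ n * (2 * ((g θ).re : ℂ))‖ = 2 * (g θ).re
      simp [map_mul, map_pow, map_inv₀, heabs θ,
        _root_.abs_of_nonneg (hgre θ)]
    rw [hb2] at hb1
    rw [intervalIntegral.integral_const_mul, hre2] at hb1
    linarith [hb1]
  -- conclude
  have hAn := hA n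
  have hnorm : (2 * Real.pi) * (‖Q.coeff n‖ * (r:ℝ)^n) = ‖K n‖ := by
    have h1 : ‖Complex.I * K n‖ = ‖K n‖ := by rw [norm_mul, Complex.norm_I, one_mul]
    rw [← h1, hAn, norm_mul, norm_mul]
    have h2 : ‖(2 * (Real.pi:ℂ) * Complex.I)‖ = 2 * Real.pi := by
      rw [norm_mul, norm_mul, Complex.norm_I, mul_one]
      norm_num [Complex.norm_real, Real.norm_eq_abs, _root_.abs_of_nonneg Real.pi_pos.le]
    have h3 : ‖((r:ℝ):ℂ)^n‖ = (r:ℝ)^n := by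
      rw [norm_pow, Complex.norm_real, Real.norm_eq_abs, _root_.abs_of_nonneg hrR.le]
    rw [h2, h3]
    ring
  have hfin : (2 * Real.pi) * (‖Q.coeff n‖ * (r:ℝ)^n) ≤ (2 * Real.pi) * 2 := by
    rw [hnorm]
    calc ‖K n‖ ≤ 4 * Real.pi := hD
      _ = (2*Real.pi) * 2 := by ring
  exact le_of_mul_le_mul_left hfin (by positivity)

lemma coeff_bound (q : ℂ → ℂ) (hqa : AnalyticOnNhd ℂ q (ball (0:ℂ) 1)) (hq0 : q 0 = 1)
    (hre : ∀ z ∈ ball (0:ℂ) 1, 0 ≤ (q z).re) (Q : FormalMultilinearSeries ℂ ℂ ℂ)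
    (hQ : HasFPowerSeriesAt q Q 0) (n : ℕ) (hn : 1 ≤ n) : ‖Q.coeff n‖ ≤ 2 := by
  have key : ∀ r : ℝ, 0 < r → r < 1 → ‖Q.coeff n‖ * r ^ n ≤ 2 := by
    intro r h0 h1
    have h2 := coeff_bound_aux q hqa hq0 hre Q hQ n hn r.toNNReal
      (by simp [Real.toNNReal_pos, h0]) (by rw [Real.coe_toNNReal _ h0.le]; exact h1)
    rwa [Real.coe_toNNReal _ h0.le] at h2
  have hlim : Filter.Tendsto (fun r : ℝ => ‖Q.coeff n‖ * r ^ n)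
      (nhdsWithin 1 (Set.Iio 1)) (nhds ‖Q.coeff n‖) := by
    have hcont : Continuous fun r : ℝ => ‖Q.coeff n‖ * r ^ n := by continuity
    have h := (hcont.tendsto 1).mono_left
      (nhdsWithin_le_nhds (s := Set.Iio (1:ℝ)))
    simpa using h
  apply le_of_tendsto hlim
  have hmemIoo : Set.Ioo (0:ℝ) 1 ∈ nhdsWithin (1:ℝ) (Set.Iio 1) :=
    Ioo_mem_nhdsLT_of_mem (by constructor <;> norm_num)
  filter_upwards [hmemIoo] with r hr
  exact key r hr.1 hr.2

/-- `p` belongs to the Carathéodory class: `p` is analytic on the unit disk,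
`p 0 = 1`, and `Re (p z) > 0` on the unit disk. -/
def InCaratheodory (p : ℂ → ℂ) : Prop :=
  AnalyticOnNhd ℂ p (ball (0 : ℂ) 1) ∧ p 0 = 1 ∧
    ∀ z ∈ ball (0 : ℂ) 1, 0 < (p z).re

theorem cara_quartic_bound (p : ℂ → ℂ) (c : ℕ → ℂ) (hp : InCaratheodory p)
    (hc0 : c 0 = 1)
    (hrep : ∀ z ∈ ball (0 : ℂ) 1, HasSum (fun n : ℕ => c n * z ^ n) (p z)) :
    ‖c 1 ^ 4 - 3 * c 1 ^ 2 * c 2 + c 2 ^ 2 + 2 * c 1 * c 3 - c 4‖ ≤ 2 := by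
  obtain ⟨hpa, hp0, hpre⟩ := hp
  set q : ℂ → ℂ := fun z => (p z)⁻¹ with hqdef
  have hpne : ∀ z ∈ ball (0:ℂ) 1, p z ≠ 0 := by
    intro z hz h0
    have := hpre z hz
    rw [h0] at this
    simp at this
  have hqa : AnalyticOnNhd ℂ q (ball (0:ℂ) 1) := hpa.inv hpne
  have hq0 : q 0 = 1 := by rw [hqdef]; simp [hp0]
  have hqre : ∀ z ∈ ball (0:ℂ) 1, 0 ≤ (q z).re := by
    intro z hz
    rw [hqdef]
    simp only [Complex.inv_re]
    exact div_nonneg (hpre z hz).le (Complex.normSq_nonneg _)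
  obtain ⟨Q, hQ⟩ := hqa 0 (by simp)
  set d : ℕ → ℂ := Q.coeff with hd
  -- find a small radius on which q is represented by d
  obtain ⟨R, hR⟩ := hQ
  have hR0 : (0:ENNReal) < min R 1 := lt_min hR.r_pos (by norm_num)
  obtain ⟨ρn, hρ0, hρlt⟩ := ENNReal.lt_iff_exists_nnreal_btwn.mp hR0
  have hρR : (ρn : ENNReal) < R := hρlt.trans_le (min_le_left _ _)
  have hρ1' : (ρn : ENNReal) < 1 := hρlt.trans_le (min_le_right _ _)
  have hρpos : 0 < (ρn:ℝ) := by exact_mod_cast hρ0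
  have hρle1 : (ρn:ℝ) ≤ 1 := by
    have := hρ1'.le
    exact_mod_cast this
  have hrepq : ∀ z ∈ ball (0:ℂ) (ρn:ℝ), HasSum (fun k => d k * z ^ k) (q z) := by
    intro z hz
    rw [mem_ball, dist_zero_right] at hz
    have hz' : z ∈ Metric.eball (0:ℂ) R := by
      rw [Metric.mem_eball, edist_zero_right]
      have h1 : (‖z‖₊ : ENNReal) < (ρn : ENNReal) := by
        rw [ENNReal.coe_lt_coe]
        exact_mod_cast hz
      exact lt_trans h1 hρR
    have hs := hR.hasSum hz'
    rw [zero_add] at hs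
    apply hs.congr_fun
    intro k
    rw [apply_eq_pow_smul_coeff, smul_eq_mul, hd, mul_comm]
  -- coefficients of the product p * q, which equals 1
  have hrepp : ∀ z ∈ ball (0:ℂ) (ρn:ℝ), HasSum (fun k => c k * z ^ k) (p z) := by
    intro z hz
    exact hrep z (lt_of_lt_of_le (mem_ball.mp hz) (by simpa using hρle1))
  have hmul := rep_mul hrepp hrepq
  have h1rep : ∀ z ∈ ball (0:ℂ) (ρn:ℝ),
      HasSum (fun n => (∑ k ∈ Finset.range (n+1), c k * d (n-k)) * z ^ n) 1 := by
    intro z hz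
    have hz1 : z ∈ ball (0:ℂ) 1 := lt_of_lt_of_le (mem_ball.mp hz) (by simpa using hρle1)
    have := hmul z hz
    rwa [hqdef, mul_inv_cancel₀ (hpne z hz1)] at this
  have hδrep : ∀ z ∈ ball (0:ℂ) (ρn:ℝ),
      HasSum (fun n => (if n = 0 then (1:ℂ) else 0) * z ^ n) 1 := by
    intro z _
    have := hasSum_single (f := fun n => (if n = 0 then (1:ℂ) else 0) * z ^ n) 0
      (by intro b hb; simp [hb])
    simpa using this
  have huniq : (ofScalars ℂ (fun n => ∑ k ∈ Finset.range (n+1), c k * d (n-k)))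
      = ofScalars ℂ (fun n => if n = 0 then (1:ℂ) else 0) :=
    (hasFPowerSeriesAt_of_rep hρpos h1rep).eq_formalMultilinearSeries
      (hasFPowerSeriesAt_of_rep hρpos hδrep)
  have hcoe : ∀ n : ℕ, (∑ k ∈ Finset.range (n+1), c k * d (n-k))
      = (if n = 0 then (1:ℂ) else 0) := by
    have := (ofScalars_series_eq_iff ℂ _ _).mp huniq
    intro n
    exact congrFun this n
  -- extract the equations
  have hd0 : d 0 = 1 := by
    have := hcoe 0
    simpa [hc0] using this
  have e1 := hcoe 1
  have e2 := hcoe 2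
  have e3 := hcoe 3
  have e4 := hcoe 4
  simp [Finset.sum_range_succ, hc0, hd0] at e1 e2 e3 e4
  -- identify the target with d 4
  have hid : c 1 ^ 4 - 3 * c 1 ^ 2 * c 2 + c 2 ^ 2 + 2 * c 1 * c 3 - c 4 = d 4 := by
    linear_combination (c 1^3 - 2*c 1*c 2 + c 3) * e1 + (c 2 - c 1^2) * e2 + c 1 * e3 - e4
  rw [hid]
  exact coeff_bound q hqa hq0 hqre Q ⟨R, hR⟩ 4 (by norm_num)
end

section
/- If p is in the Carathéodory class P with Taylor expansion p(z) = 1 + Σ_{n≥1} p_n z^n, then |p_3 − 2 p_1 p_2 + p_1³| ≤ 2. -/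
open Metric Complex MeasureTheory intervalIntegral Finset Filter
open scoped NNReal ENNReal

noncomputable section CaraAux

private lemma integral_exp_int (k : ℤ) :
    ∫ θ in (0:ℝ)..(2*Real.pi), Complex.exp (k * θ * I)
      = if k = 0 then (2*Real.pi : ℂ) else 0 := by
  rcases eq_or_ne k 0 with rfl | hk
  · simp [Real.pi_pos.le]
  · rw [if_neg hk]
    have hki : (k : ℂ) * I ≠ 0 := by
      simp [Complex.ext_iff, hk]
    have hd : ∀ θ : ℝ, HasDerivAt (fun t : ℝ => Complex.exp (k * t * I) / (k * I))
        (Complex.exp (k * θ * I)) θ := by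
      intro θ
      have h1 : HasDerivAt (fun z : ℂ => (k : ℂ) * z * I) ((k:ℂ) * I) (θ:ℂ) := by
        simpa using (((hasDerivAt_id (θ:ℂ)).const_mul (k:ℂ)).mul_const I)
      have h2 := (h1.cexp.div_const ((k:ℂ)*I)).comp_ofReal
      simpa [mul_div_assoc, mul_div_cancel_right₀ _ hki] using h2
    rw [intervalIntegral.integral_eq_sub_of_hasDerivAt (fun θ _ => hd θ)
      ((Continuous.cexp (by fun_prop)).intervalIntegrable _ _)]
    have h3 : Complex.exp ((k:ℂ) * (2*Real.pi : ℝ) * I) = 1 := by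
      have := Complex.exp_int_mul_two_pi_mul_I k
      rw [← this]; push_cast; ring_nf
    push_cast at h3 ⊢
    rw [h3]
    simp


private lemma summable_norm_coef {f : ℂ → ℂ} {a : ℕ → ℂ}
    (hrep : ∀ z ∈ ball (0 : ℂ) 1, HasSum (fun n : ℕ => a n * z ^ n) (f z))
    {r : ℝ} (hr0 : 0 ≤ r) (hr1 : r < 1) :
    Summable (fun n : ℕ => ‖a n‖ * r ^ n) := by
  set ρ : ℝ := (1 + r) / 2 with hρ
  have hrρ : r < ρ := by rw [hρ]; linarith
  have hρ1 : ρ < 1 := by rw [hρ]; linarith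
  have hρ0 : 0 < ρ := by rw [hρ]; linarith
  have hmem : (ρ : ℂ) ∈ ball (0 : ℂ) 1 := by
    simp [abs_of_pos hρ0, hρ1]
  have hsum := (hrep _ hmem).summable
  have htend : Tendsto (fun n : ℕ => ‖a n * (ρ:ℂ) ^ n‖) atTop (nhds 0) := by
    simpa using hsum.tendsto_atTop_zero.norm
  obtain ⟨C, hC⟩ := htend.bddAbove_range.imp (fun C hC n => hC ⟨n, rfl⟩)
  have hC' : ∀ n, ‖a n‖ * ρ ^ n ≤ C := by
    intro n
    have := hC n
    simpa [norm_mul, norm_pow, abs_of_pos hρ0] using this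
  have hgeom : Summable (fun n : ℕ => C * (r / ρ) ^ n) := by
    refine (summable_geometric_of_lt_one (by positivity) ?_).mul_left C
    rw [div_lt_one hρ0]; exact hrρ
  refine Summable.of_nonneg_of_le (fun n => by positivity) (fun n => ?_) hgeom
  have h1 : ‖a n‖ * r ^ n = (‖a n‖ * ρ ^ n) * (r / ρ) ^ n := by
    have hρn : ρ ^ n ≠ 0 := by positivity
    rw [mul_assoc, ← mul_pow, mul_div_assoc', mul_comm ρ r, mul_div_assoc, div_self hρ0.ne', mul_one]
  rw [h1]
  have h2 : (0:ℝ) ≤ (r / ρ) ^ n := by positivity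
  exact mul_le_mul_of_nonneg_right (hC' n) h2

private lemma circle_coeff {f : ℂ → ℂ} {a : ℕ → ℂ}
    (hrep : ∀ z ∈ ball (0 : ℂ) 1, HasSum (fun n : ℕ => a n * z ^ n) (f z))
    (hcont : ContinuousOn f (ball (0:ℂ) 1))
    {r : ℝ} (hr0 : 0 < r) (hr1 : r < 1) (k : ℤ) :
    ∫ θ in (0:ℝ)..(2*Real.pi), f (r * Complex.exp (θ * I)) * Complex.exp (-(k:ℂ) * θ * I)
      = if 0 ≤ k then (2*Real.pi : ℂ) * (a k.toNat * (r:ℂ) ^ k.toNat) else 0 := by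
  have hmem : ∀ θ : ℝ, (r : ℂ) * Complex.exp (θ * I) ∈ ball (0:ℂ) 1 := by
    intro θ
    simp only [mem_ball_zero_iff, norm_mul, Complex.norm_exp_ofReal_mul_I,
      mul_one, Complex.norm_real, Real.norm_eq_abs]
    rwa [abs_of_pos hr0]
  have hcc : Continuous (fun θ : ℝ => f ((r:ℂ) * Complex.exp (θ * I))) := by
    apply hcont.comp_continuous (by fun_prop) hmem
  -- termwise integration
  have hkey : HasSum
      (fun n : ℕ => ∫ θ in (0:ℝ)..(2*Real.pi),
        a n * ((r:ℂ) * Complex.exp (θ * I)) ^ n * Complex.exp (-(k:ℂ) * θ * I))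
      (∫ θ in (0:ℝ)..(2*Real.pi),
        f ((r:ℂ) * Complex.exp (θ * I)) * Complex.exp (-(k:ℂ) * θ * I)) := by
    apply intervalIntegral.hasSum_integral_of_dominated_convergence
      (bound := fun n (θ:ℝ) => ‖a n‖ * r ^ n)
    · intro n
      apply Continuous.aestronglyMeasurable
      fun_prop
    · intro n
      filter_upwards with θ _
      simp only [norm_mul, norm_pow, Complex.norm_exp_ofReal_mul_I]
      have h1 : ‖Complex.exp (-(k:ℂ) * θ * I)‖ = 1 := by
        rw [Complex.norm_exp]
        have h2 : (-(k:ℂ) * θ * I).re = 0 := by simp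
        rw [h2, Real.exp_zero]
      rw [h1]
      simp only [Complex.norm_real, Real.norm_eq_abs, abs_of_pos hr0, mul_one]
      norm_num
    · filter_upwards with θ _
      exact summable_norm_coef hrep hr0.le hr1
    · apply _root_.intervalIntegrable_const
    · filter_upwards with θ _
      exact (hrep _ (hmem θ)).mul_right _
  have hterm : ∀ n : ℕ,
      (∫ θ in (0:ℝ)..(2*Real.pi),
        a n * ((r:ℂ) * Complex.exp (θ * I)) ^ n * Complex.exp (-(k:ℂ) * θ * I))
      = if (n : ℤ) = k then (2*Real.pi : ℂ) * (a n * (r:ℂ) ^ n) else 0 := by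
    intro n
    have h1 : ∀ θ : ℝ, a n * ((r:ℂ) * Complex.exp (θ * I)) ^ n * Complex.exp (-(k:ℂ) * θ * I)
        = (a n * (r:ℂ) ^ n) * Complex.exp ((((n:ℤ) - k : ℤ) : ℂ) * θ * I) := by
      intro θ
      have e1 : ((r:ℂ) * Complex.exp (θ * I)) ^ n
          = (r:ℂ) ^ n * Complex.exp ((n:ℂ) * (θ * I)) := by
        rw [mul_pow, ← Complex.exp_nat_mul]
      have e2 : Complex.exp ((n:ℂ) * (θ * I)) * Complex.exp (-(k:ℂ) * θ * I)
          = Complex.exp ((((n:ℤ) - k : ℤ) : ℂ) * θ * I) := by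
        rw [← Complex.exp_add]
        congr 1
        push_cast
        ring
      rw [e1]
      linear_combination (a n * (r:ℂ) ^ n) * e2
    simp only [h1]
    rw [intervalIntegral.integral_const_mul, integral_exp_int ((n:ℤ) - k)]
    rcases eq_or_ne ((n:ℤ)) k with h | h
    · simp [h, mul_comm]
    · simp [sub_eq_zero, h]
  rw [← hkey.tsum_eq]
  rcases le_or_gt 0 k with hk | hk
  · rw [if_pos hk]
    have h2 : ∀ n : ℕ, ((n:ℤ) = k) ↔ n = k.toNat := by
      intro n
      omega
    have h3 : (fun n : ℕ => if (n : ℤ) = k then (2*Real.pi : ℂ) * (a n * (r:ℂ) ^ n) else 0)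
        = fun n : ℕ => if n = k.toNat then (2*Real.pi : ℂ) * (a k.toNat * (r:ℂ) ^ k.toNat) else 0 := by
      funext n
      by_cases h : n = k.toNat
      · subst h; simp [h2, Int.toNat_of_nonneg hk]
      · rw [if_neg ((h2 n).not.mpr h), if_neg h]
    calc ∑' n, _ = ∑' n : ℕ, if (n : ℤ) = k then (2*Real.pi : ℂ) * (a n * (r:ℂ) ^ n) else 0 :=
          tsum_congr hterm
      _ = _ := by rw [h3]; exact (hasSum_ite_eq k.toNat _).tsum_eq
  · rw [if_neg (not_le.mpr hk)]
    have h3 : ∀ n : ℕ, ((n:ℤ) = k) = False := by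
      intro n; simp only [eq_iff_iff, iff_false]; omega
    calc ∑' n, _ = ∑' n : ℕ, if (n : ℤ) = k then (2*Real.pi : ℂ) * (a n * (r:ℂ) ^ n) else 0 :=
          tsum_congr hterm
      _ = 0 := by simp [h3]

private lemma cara_coeff_bound {f : ℂ → ℂ} {a : ℕ → ℂ} (hf : InCaratheodory f)
    (ha0 : a 0 = 1)
    (hrep : ∀ z ∈ ball (0 : ℂ) 1, HasSum (fun n : ℕ => a n * z ^ n) (f z))
    (n : ℕ) (hn : 1 ≤ n) : ‖a n‖ ≤ 2 := by
  have hcont : ContinuousOn f (ball (0:ℂ) 1) := hf.1.continuousOn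
  have key : ∀ r : ℝ, 0 < r → r < 1 → ‖a n‖ * r ^ n ≤ 2 := by
    intro r hr0 hr1
    have hmem : ∀ θ : ℝ, (r : ℂ) * Complex.exp (θ * I) ∈ ball (0:ℂ) 1 := by
      intro θ
      simp only [mem_ball_zero_iff, norm_mul, Complex.norm_exp_ofReal_mul_I,
        mul_one, Complex.norm_real, Real.norm_eq_abs]
      rwa [abs_of_pos hr0]
    have hcc : Continuous (fun θ : ℝ => f ((r:ℂ) * Complex.exp (θ * I))) :=
      hcont.comp_continuous (by fun_prop) hmem
    set k0 : ℤ := -(n : ℤ) with hk0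
    have I0 := circle_coeff hrep hcont hr0 hr1 0
    have I1 := circle_coeff hrep hcont hr0 hr1 (n : ℤ)
    have I2 := circle_coeff hrep hcont hr0 hr1 k0
    rw [if_pos le_rfl] at I0
    rw [if_pos (Int.ofNat_nonneg n)] at I1
    rw [if_neg (by omega)] at I2
    simp only [Int.cast_zero, neg_zero, Int.toNat_natCast, Int.cast_natCast,
      Int.toNat_zero, pow_zero, mul_one, ha0] at I0 I1
    -- conjugate integral vanishes
    have Iconj : ∫ θ in (0:ℝ)..(2*Real.pi),
        (starRingEnd ℂ) (f ((r:ℂ) * Complex.exp (θ * I))) * Complex.exp (-(n:ℂ) * θ * I) = 0 := by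
      have hc : ∀ θ : ℝ, (starRingEnd ℂ) (f ((r:ℂ) * Complex.exp (θ * I)) * Complex.exp (-(k0:ℂ) * θ * I))
          = (starRingEnd ℂ) (f ((r:ℂ) * Complex.exp (θ * I))) * Complex.exp (-(n:ℂ) * θ * I) := by
        intro θ
        rw [map_mul]
        congr 1
        rw [← Complex.exp_conj]
        congr 1
        rw [hk0]
        push_cast
        simp [Complex.ext_iff]
      have h4 : ∫ θ in (0:ℝ)..(2*Real.pi),
          (starRingEnd ℂ) (f ((r:ℂ) * Complex.exp (θ * I)) * Complex.exp (-(k0:ℂ) * θ * I))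
          = (starRingEnd ℂ) (∫ θ in (0:ℝ)..(2*Real.pi),
              f ((r:ℂ) * Complex.exp (θ * I)) * Complex.exp (-(k0:ℂ) * θ * I)) := by
        rw [intervalIntegral_eq_integral_uIoc, intervalIntegral_eq_integral_uIoc,
          integral_conj, if_pos (by positivity : (0:ℝ) ≤ 2*Real.pi), one_smul, one_smul]
      rw [← funext hc, h4, I2, map_zero]
    -- the integral of (f + conj f) * e^{-inθ}
    have hsum2 : ∫ θ in (0:ℝ)..(2*Real.pi),
        (f ((r:ℂ) * Complex.exp (θ * I)) + (starRingEnd ℂ) (f ((r:ℂ) * Complex.exp (θ * I))))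
          * Complex.exp (-(n:ℂ) * θ * I)
        = (2*Real.pi : ℂ) * (a n * (r:ℂ) ^ n) := by
      have hi1 : IntervalIntegrable (fun θ : ℝ =>
          f ((r:ℂ) * Complex.exp (θ * I)) * Complex.exp (-(n:ℂ) * θ * I)) volume 0 (2*Real.pi) :=
        (hcc.mul (by fun_prop)).intervalIntegrable _ _
      have hi2 : IntervalIntegrable (fun θ : ℝ =>
          (starRingEnd ℂ) (f ((r:ℂ) * Complex.exp (θ * I))) * Complex.exp (-(n:ℂ) * θ * I))
          volume 0 (2*Real.pi) :=
        ((Complex.continuous_conj.comp hcc).mul (by fun_prop)).intervalIntegrable _ _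
      have : ∀ θ : ℝ, (f ((r:ℂ) * Complex.exp (θ * I)) + (starRingEnd ℂ) (f ((r:ℂ) * Complex.exp (θ * I))))
          * Complex.exp (-(n:ℂ) * θ * I)
          = f ((r:ℂ) * Complex.exp (θ * I)) * Complex.exp (-(n:ℂ) * θ * I)
            + (starRingEnd ℂ) (f ((r:ℂ) * Complex.exp (θ * I))) * Complex.exp (-(n:ℂ) * θ * I) := by
        intro θ; ring
      rw [funext this, intervalIntegral.integral_add hi1 hi2, Iconj, add_zero, I1]
    -- norm bound
    have hre : ∀ θ : ℝ, ‖(f ((r:ℂ) * Complex.exp (θ * I)) + (starRingEnd ℂ) (f ((r:ℂ) * Complex.exp (θ * I))))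
        * Complex.exp (-(n:ℂ) * θ * I)‖ = 2 * (f ((r:ℂ) * Complex.exp (θ * I))).re := by
      intro θ
      rw [norm_mul, Complex.add_conj]
      have h2 : (-(n:ℂ) * θ * I).re = 0 := by simp
      rw [Complex.norm_exp, h2, Real.exp_zero, mul_one]
      have h3 : (0:ℝ) < (f ((r:ℂ) * Complex.exp (θ * I))).re := hf.2.2 _ (hmem θ)
      rw [Complex.norm_real, Real.norm_eq_abs, abs_of_pos (by linarith)]
    have hnormle : ‖(2*Real.pi : ℂ) * (a n * (r:ℂ) ^ n)‖
        ≤ ∫ θ in (0:ℝ)..(2*Real.pi), 2 * (f ((r:ℂ) * Complex.exp (θ * I))).re := by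
      rw [← hsum2]
      refine (intervalIntegral.norm_integral_le_integral_norm (by positivity)).trans_eq ?_
      exact intervalIntegral.integral_congr (fun θ _ => hre θ)
    -- compute the real integral
    have hreint : ∫ θ in (0:ℝ)..(2*Real.pi), 2 * (f ((r:ℂ) * Complex.exp (θ * I))).re
        = 4 * Real.pi := by
      have h5 : ∫ θ in (0:ℝ)..(2*Real.pi), (f ((r:ℂ) * Complex.exp (θ * I))).re
          = (∫ θ in (0:ℝ)..(2*Real.pi), f ((r:ℂ) * Complex.exp (θ * I))).re := by
        have := Complex.reCLM.intervalIntegral_comp_comm (μ := volume) (a := (0:ℝ)) (b := 2*Real.pi)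
          (f := fun θ : ℝ => f ((r:ℂ) * Complex.exp (θ * I))) (hcc.intervalIntegrable _ _)
        simpa using this
      have I0' : (∫ θ in (0:ℝ)..(2*Real.pi), f ((r:ℂ) * Complex.exp (θ * I))).re = 2*Real.pi := by
        have hcast0 : ∀ θ : ℝ, f ((r:ℂ) * Complex.exp (θ * I))
            = f ((r:ℂ) * Complex.exp (θ * I)) * Complex.exp ((0:ℂ) * θ * I) := by
          intro θ; norm_num
        rw [funext hcast0, I0]
        simp
      rw [intervalIntegral.integral_const_mul, h5, I0']
      ring
    have hfin : 2*Real.pi * (‖a n‖ * r ^ n) ≤ 4 * Real.pi := by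
      calc 2*Real.pi * (‖a n‖ * r ^ n) = ‖(2*Real.pi : ℂ) * (a n * (r:ℂ) ^ n)‖ := by
            simp only [norm_mul, norm_pow, Complex.norm_two,
              Complex.norm_real, Real.norm_eq_abs]
            rw [abs_of_pos hr0, abs_of_pos Real.pi_pos]
        _ ≤ ∫ θ in (0:ℝ)..(2*Real.pi), 2 * (f ((r:ℂ) * Complex.exp (θ * I))).re := hnormle
        _ = 4 * Real.pi := hreint
    nlinarith [Real.pi_pos]
  -- take the limit r → 1⁻
  have hlim : Tendsto (fun r : ℝ => ‖a n‖ * r ^ n) (nhdsWithin 1 (Set.Iio 1)) (nhds (‖a n‖)) := by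
    have : Continuous (fun r : ℝ => ‖a n‖ * r ^ n) := by fun_prop
    have h := this.tendsto 1
    simp only [one_pow, mul_one] at h
    exact h.mono_left nhdsWithin_le_nhds
  refine le_of_tendsto hlim ?_
  filter_upwards [Ioo_mem_nhdsLT_of_mem (Set.mem_Ioc.mpr ⟨zero_lt_one, le_refl 1⟩)] with r hr
  exact key r hr.1 hr.2

private lemma rep_hasFPowerSeriesOnBall {f : ℂ → ℂ} {a : ℕ → ℂ}
    (hrep : ∀ z ∈ ball (0 : ℂ) 1, HasSum (fun n : ℕ => a n * z ^ n) (f z)) :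
    HasFPowerSeriesOnBall f (FormalMultilinearSeries.ofScalars ℂ a) 0 1 := by
  have hnorm : ∀ n, ‖FormalMultilinearSeries.ofScalars ℂ a n‖ = ‖a n‖ := by
    intro n
    show ‖a n • ContinuousMultilinearMap.mkPiAlgebraFin ℂ n ℂ‖ = ‖a n‖
    rw [norm_smul (a n) (ContinuousMultilinearMap.mkPiAlgebraFin ℂ n ℂ),
      ContinuousMultilinearMap.norm_mkPiAlgebraFin, mul_one]
  have hrad : 1 ≤ (FormalMultilinearSeries.ofScalars ℂ a).radius := by
    apply ENNReal.le_of_forall_nnreal_lt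
    intro r hr
    have hr1 : (r : ℝ) < 1 := by exact_mod_cast hr
    apply FormalMultilinearSeries.le_radius_of_summable
    have := summable_norm_coef hrep r.coe_nonneg hr1
    refine this.congr fun n => ?_
    rw [hnorm]
  refine ⟨hrad, one_pos, ?_⟩
  intro y hy
  have hy1 : ‖y‖ < 1 := by
    rw [mem_emetric_ball_zero_iff, ← ofReal_norm, ENNReal.ofReal_lt_one] at hy
    exact hy
  have h1 := hrep y (mem_ball_zero_iff.mpr hy1)
  rw [zero_add]
  have heq : (fun n => (FormalMultilinearSeries.ofScalars ℂ a n) fun _ => y)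
      = fun n => a n * y ^ n := by
    funext n
    rw [FormalMultilinearSeries.ofScalars_apply_eq, smul_eq_mul]
  rw [heq]
  exact h1

private lemma coeff_unique {f : ℂ → ℂ} {a b : ℕ → ℂ}
    (ha : ∀ z ∈ ball (0 : ℂ) 1, HasSum (fun n : ℕ => a n * z ^ n) (f z))
    (hb : ∀ z ∈ ball (0 : ℂ) 1, HasSum (fun n : ℕ => b n * z ^ n) (f z)) : a = b :=
  FormalMultilinearSeries.ofScalars_series_injective ℂ ℂ
    ((rep_hasFPowerSeriesOnBall ha).hasFPowerSeriesAt.eq_formalMultilinearSeries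
      (rep_hasFPowerSeriesOnBall hb).hasFPowerSeriesAt)

private lemma inv_rep {f : ℂ → ℂ} (hf : AnalyticOnNhd ℂ f (ball (0:ℂ) 1))
    (hne : ∀ z ∈ ball (0:ℂ) 1, f z ≠ 0) :
    ∃ d : ℕ → ℂ, ∀ z ∈ ball (0 : ℂ) 1, HasSum (fun n : ℕ => d n * z ^ n) ((f z)⁻¹) := by
  set q : ℂ → ℂ := fun z => (f z)⁻¹ with hq
  have hdiff : DifferentiableOn ℂ q (ball (0:ℂ) 1) := by
    intro z hz
    exact (((hf z hz).inv (hne z hz)).differentiableAt).differentiableWithinAt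
  have hball : ∀ R : ℝ≥0, 0 < R → (R : ℝ) < 1 →
      HasFPowerSeriesOnBall q (cauchyPowerSeries q 0 R) 0 R := by
    intro R hR0 hR
    refine (hdiff.mono ?_).hasFPowerSeriesOnBall hR0
    intro w hw
    rw [mem_closedBall_zero_iff] at hw
    rw [mem_ball_zero_iff]
    exact lt_of_le_of_lt hw hR
  have hhalf := hball (1/2) (by norm_num) (by norm_num)
  refine ⟨fun n => cauchyPowerSeries q 0 (1/2 : ℝ≥0) n (fun _ => 1), ?_⟩
  intro z hz
  have hz1 : ‖z‖ < 1 := mem_ball_zero_iff.mp hz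
  set R : ℝ≥0 := Real.toNNReal ((‖z‖ + 1) / 2) with hR
  have hRval : (R : ℝ) = (‖z‖ + 1) / 2 := Real.coe_toNNReal _ (by positivity)
  have hR0 : 0 < R := by
    rw [← NNReal.coe_pos, hRval]
    positivity
  have hR1 : (R : ℝ) < 1 := by
    rw [hRval]
    linarith
  have hzR : ‖z‖ < (R : ℝ) := by
    rw [hRval]
    linarith [norm_nonneg z]
  have hRb := hball R hR0 hR1
  have hser : cauchyPowerSeries q 0 (R : ℝ) = cauchyPowerSeries q 0 ((1/2 : ℝ≥0) : ℝ) :=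
    hRb.hasFPowerSeriesAt.eq_formalMultilinearSeries hhalf.hasFPowerSeriesAt
  have hz' : z ∈ Metric.eball (0:ℂ) (R : ℝ≥0∞) := by
    rw [mem_emetric_ball_zero_iff, ← ofReal_norm, ← ENNReal.ofReal_coe_nnreal,
      ENNReal.ofReal_lt_ofReal_iff (NNReal.coe_pos.mpr hR0)]
    exact hzR
  have h1 := hRb.hasSum hz'
  rw [hser] at h1
  simp only [zero_add] at h1
  set F := cauchyPowerSeries q 0 ((1/2 : ℝ≥0) : ℝ) with hF
  have heq : (fun n => F n fun _ => z) = fun n => F n (fun _ => (1:ℂ)) * z ^ n := by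
    funext n
    have h2 := (F n).map_smul_univ (fun _ : Fin n => z) (fun _ => (1:ℂ))
    simp only [smul_eq_mul, mul_one, Finset.prod_const, Finset.card_univ,
      Fintype.card_fin] at h2
    rw [h2, mul_comm]
  rw [heq] at h1
  exact h1

end CaraAux

theorem cara_cubic_bound (p : ℂ → ℂ) (c : ℕ → ℂ) (hp : InCaratheodory p)
    (hc0 : c 0 = 1)
    (hrep : ∀ z ∈ ball (0 : ℂ) 1, HasSum (fun n : ℕ => c n * z ^ n) (p z)) :
    ‖c 3 - 2 * c 1 * c 2 + c 1 ^ 3‖ ≤ 2 := by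
  have hne : ∀ z ∈ ball (0:ℂ) 1, p z ≠ 0 := by
    intro z hz h
    have h2 := hp.2.2 z hz
    rw [h] at h2
    simp at h2
  obtain ⟨d, hd⟩ := inv_rep hp.1 hne
  have hq_cara : InCaratheodory (fun z => (p z)⁻¹) := by
    refine ⟨fun z hz => (hp.1 z hz).inv (hne z hz), by simp only []; rw [hp.2.1]; simp, ?_⟩
    intro z hz
    simp only
    rw [Complex.inv_re]
    exact div_pos (hp.2.2 z hz) (Complex.normSq_pos.mpr (hne z hz))
  have hsc : ∀ z ∈ ball (0:ℂ) 1, Summable (fun n => ‖c n * z ^ n‖) := by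
    intro z hz
    have h := summable_norm_coef hrep (norm_nonneg z) (mem_ball_zero_iff.mp hz)
    refine h.congr fun n => ?_
    rw [norm_mul, norm_pow]
  have hsd : ∀ z ∈ ball (0:ℂ) 1, Summable (fun n => ‖d n * z ^ n‖) := by
    intro z hz
    have h := summable_norm_coef hd (norm_nonneg z) (mem_ball_zero_iff.mp hz)
    refine h.congr fun n => ?_
    rw [norm_mul, norm_pow]
  have hconv : ∀ z ∈ ball (0:ℂ) 1,
      HasSum (fun n => (∑ k ∈ Finset.range (n+1), c k * d (n-k)) * z ^ n) (1:ℂ) := by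
    intro z hz
    have h1 := hasSum_sum_range_mul_of_summable_norm (hsc z hz) (hsd z hz)
    rw [(hrep z hz).tsum_eq, (hd z hz).tsum_eq, mul_inv_cancel₀ (hne z hz)] at h1
    have h3 : ∀ n, ∑ k ∈ Finset.range (n+1), (c k * z ^ k) * (d (n-k) * z ^ (n-k))
        = (∑ k ∈ Finset.range (n+1), c k * d (n-k)) * z ^ n := by
      intro n
      rw [Finset.sum_mul]
      refine Finset.sum_congr rfl fun k hk => ?_
      have hk' : k ≤ n := Nat.lt_succ_iff.mp (Finset.mem_range.mp hk)
      calc (c k * z ^ k) * (d (n-k) * z ^ (n-k))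
          = c k * d (n-k) * (z ^ k * z ^ (n-k)) := by ring
        _ = c k * d (n-k) * z ^ n := by rw [← pow_add, Nat.add_sub_cancel' hk']
    simp only [h3] at h1
    exact h1
  have hdelta : ∀ z ∈ ball (0:ℂ) 1,
      HasSum (fun n : ℕ => (if n = 0 then (1:ℂ) else 0) * z ^ n) (1:ℂ) := by
    intro z hz
    have h := hasSum_ite_eq (0:ℕ) (1:ℂ)
    have heq : (fun n : ℕ => (if n = 0 then (1:ℂ) else 0) * z ^ n)
        = fun n : ℕ => if n = 0 then (1:ℂ) else 0 := by
      funext n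
      by_cases hn : n = 0 <;> simp [hn]
    rw [heq]
    exact h
  have he := coeff_unique hconv hdelta
  have e0 := congrFun he 0
  have e1 := congrFun he 1
  have e2 := congrFun he 2
  have e3 := congrFun he 3
  simp only [Finset.sum_range_succ, Finset.sum_range_zero, zero_add] at e0 e1 e2 e3
  norm_num at e0 e1 e2 e3
  rw [hc0] at e0 e1 e2 e3
  have hd0 : d 0 = 1 := by linear_combination e0
  have hd1 : d 1 = -(c 1) := by linear_combination e1 - c 1 * hd0
  have hd2 : d 2 = c 1 ^ 2 - c 2 := by linear_combination e2 - c 1 * hd1 - c 2 * hd0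
  have hd3 : d 3 = -(c 3 - 2 * c 1 * c 2 + c 1 ^ 3) := by
    linear_combination e3 - c 1 * hd2 - c 2 * hd1 - c 3 * hd0
  have habs : c 3 - 2 * c 1 * c 2 + c 1 ^ 3 = -(d 3) := by rw [hd3]; ring
  rw [habs, norm_neg]
  have hb := cara_coeff_bound hq_cara hd0 hd 3 (by norm_num)
  exact hb
end

section
/- If p is in the Carathéodory class P with Taylor expansion p(z) = 1 + Σ_{n≥1} p_n z^n and λ is a real number, then |p_2 − λ p_1²| ≤ 2 − 4λ when λ ≤ 0; |p_2 − λ p_1²| ≤ 2 when 0 ≤ λ ≤ 1; and |p_2 − λ p_1²| ≤ 4λ − 2 when λ ≥ 1. Moreover, for 0 < λ ≤ 1/2 one has the refinement |p_2 − λ p_1²| + λ|p_1|² ≤ 2, and for 1/2 < λ ≤ 1 one has |p_2 − λ p_1²| + (1 − λ)|p_1|² ≤ 2. -/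
open Metric

open Set Function Filter

namespace CaraAux

lemma abs_le_abs_of_normSq_le {x y : ℂ} (h : Complex.normSq x ≤ Complex.normSq y) :
    ‖x‖ ≤ ‖y‖ := by
  rw [Complex.norm_def, Complex.norm_def]
  exact Real.sqrt_le_sqrt h

/-- Taylor coefficient extraction: `deriv p 0 = c 1` and `deriv (dslope p 0) 0 = c 2`. -/
lemma series_facts (p : ℂ → ℂ) (c : ℕ → ℂ)
    (hrep : ∀ z ∈ ball (0 : ℂ) 1, HasSum (fun n : ℕ => c n * z ^ n) (p z)) :
    deriv p 0 = c 1 ∧ deriv (dslope p 0) 0 = c 2 := by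
  set P := FormalMultilinearSeries.ofScalars ℂ c with hP
  have hmem : (1 / 2 : ℂ) ∈ ball (0 : ℂ) 1 := by
    simp only [mem_ball, dist_zero_right]
    rw [show ((1 : ℂ) / 2) = ((1 / 2 : ℝ) : ℂ) by norm_num, Complex.norm_real]
    norm_num
  have hsum := hrep _ hmem
  have htends : Tendsto (fun n => ‖c n * (1 / 2 : ℂ) ^ n‖) atTop (nhds 0) := by
    simpa using hsum.summable.tendsto_atTop_zero.norm
  obtain ⟨C, hC⟩ := htends.bddAbove_range
  have hCmem : ∀ n : ℕ, ‖c n * (1 / 2 : ℂ) ^ n‖ ≤ C := fun n => hC (Set.mem_range_self n)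
  have hrad : ((1 / 2 : NNReal) : ENNReal) ≤ P.radius := by
    apply P.le_radius_of_bound C
    intro n
    have h1 : ‖P n‖ = ‖c n‖ := FormalMultilinearSeries.ofScalars_norm ℂ c n
    have hhalf : ‖(1 / 2 : ℂ)‖ = (1 / 2 : ℝ) := by
      rw [show ((1 : ℂ) / 2) = ((1 / 2 : ℝ) : ℂ) by norm_num, Complex.norm_real]
      norm_num
    have h2 : ‖c n * (1 / 2 : ℂ) ^ n‖ = ‖c n‖ * (1 / 2 : ℝ) ^ n := by
      rw [norm_mul, norm_pow, hhalf]
    have h3 := hCmem n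
    rw [h2] at h3
    calc ‖P n‖ * ((1 / 2 : NNReal) : ℝ) ^ n = ‖c n‖ * (1 / 2 : ℝ) ^ n := by
          rw [h1]; norm_num
      _ ≤ C := h3
  have hcoeff : ∀ n, P.coeff n = c n := by
    intro n
    show P n (fun _ => 1) = c n
    rw [hP, FormalMultilinearSeries.ofScalars_apply_eq]
    simp
  have hball : HasFPowerSeriesOnBall p P 0 ((1 / 2 : NNReal) : ENNReal) := by
    refine ⟨hrad, by norm_num, ?_⟩
    intro y hy
    have hy1 : y ∈ ball (0 : ℂ) 1 := by
      rw [EMetric.mem_ball, edist_zero_right, enorm_eq_nnnorm, ← ENNReal.coe_lt_coe.symm] at hy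
      have : ‖y‖₊ < (1 / 2 : NNReal) := by exact_mod_cast hy
      have : ‖y‖ < 1 / 2 := this
      simp only [mem_ball, dist_zero_right]
      linarith
    have := hrep y hy1
    simpa [FormalMultilinearSeries.ofScalars_apply_eq, smul_eq_mul, zero_add, hcoeff,
      mul_comm] using this
  have hat : HasFPowerSeriesAt p P 0 := ⟨_, hball⟩
  constructor
  · exact hat.deriv.trans (hcoeff 1)
  · have hsl : HasFPowerSeriesAt (dslope p 0) P.fslope 0 :=
      hat.has_fpower_series_dslope_fslope
    have h2 : P.fslope.coeff 1 = c 2 := by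
      rw [FormalMultilinearSeries.coeff_fslope]
      exact hcoeff 2
    exact hsl.deriv.trans h2

end CaraAux

set_option maxHeartbeats 2000000 in
theorem cara_fekete_szego (p : ℂ → ℂ) (c : ℕ → ℂ) (hp : InCaratheodory p)
    (hc0 : c 0 = 1)
    (hrep : ∀ z ∈ ball (0 : ℂ) 1, HasSum (fun n : ℕ => c n * z ^ n) (p z))
    (l : ℝ) :
    (l ≤ 0 → ‖c 2 - (l : ℂ) * c 1 ^ 2‖ ≤ 2 - 4 * l) ∧
    (0 ≤ l ∧ l ≤ 1 → ‖c 2 - (l : ℂ) * c 1 ^ 2‖ ≤ 2) ∧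
    (1 ≤ l → ‖c 2 - (l : ℂ) * c 1 ^ 2‖ ≤ 4 * l - 2) ∧
    (0 < l ∧ l ≤ 1 / 2 →
      ‖c 2 - (l : ℂ) * c 1 ^ 2‖ + l * ‖c 1‖ ^ 2 ≤ 2) ∧
    (1 / 2 < l ∧ l ≤ 1 →
      ‖c 2 - (l : ℂ) * c 1 ^ 2‖ + (1 - l) * ‖c 1‖ ^ 2 ≤ 2) := by
  classical
  obtain ⟨hpa, hp0, hpre⟩ := hp
  obtain ⟨hd1, hd2⟩ := CaraAux.series_facts p c hrep
  -- `p z + 1 ≠ 0` on the disk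
  have hpne : ∀ z ∈ ball (0 : ℂ) 1, p z + 1 ≠ 0 := by
    intro z hz h
    have h1 : (p z + 1).re = 0 := by rw [h]; simp
    have h2 := hpre z hz
    simp [Complex.add_re] at h1
    linarith
  -- the auxiliary Schwarz map ω
  set ω : ℂ → ℂ := fun z => (p z - 1) * (p z + 1)⁻¹ with hω
  have hωd : DifferentiableOn ℂ ω (ball (0 : ℂ) 1) := by
    apply AnalyticOnNhd.differentiableOn
    exact (hpa.sub analyticOnNhd_const).mul
      ((hpa.add analyticOnNhd_const).inv hpne)
  have hω0 : ω 0 = 0 := by simp [hω, hp0]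
  have hωmaps : MapsTo ω (ball (0 : ℂ) 1) (ball (0 : ℂ) 1) := by
    intro z hz
    have hne := hpne z hz
    have habs : ‖p z - 1‖ < ‖p z + 1‖ := by
      have hre := hpre z hz
      have hsq : Complex.normSq (p z - 1) < Complex.normSq (p z + 1) := by
        simp only [Complex.normSq_apply, Complex.sub_re, Complex.sub_im, Complex.add_re,
          Complex.add_im, Complex.one_re, Complex.one_im]
        nlinarith
      rw [Complex.norm_def, Complex.norm_def]
      exact Real.sqrt_lt_sqrt (Complex.normSq_nonneg _) hsq
    simp only [mem_ball, dist_zero_right, hω]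
    rw [norm_mul, norm_inv]
    have hpos : (0 : ℝ) < ‖p z + 1‖ := by
      simpa [norm_pos_iff] using hne
    rw [mul_inv_lt_iff₀ hpos, one_mul]
    simpa using habs
  -- g = dslope ω 0
  set g : ℂ → ℂ := dslope ω 0 with hgdef
  have hωmaps' : MapsTo ω (ball (0 : ℂ) 1) (ball (ω 0) 1) := by rwa [hω0]
  have hg_le : ∀ z ∈ ball (0 : ℂ) 1, ‖g z‖ ≤ 1 := by
    intro z hz
    have := Complex.norm_dslope_le_div_of_mapsTo_ball hωd (hωmaps'.mono_right ball_subset_closedBall) hz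
    simpa using this
  have hgd : DifferentiableOn ℂ g (ball (0 : ℂ) 1) :=
    (Complex.differentiableOn_dslope (ball_mem_nhds _ one_pos)).mpr hωd
  -- the explicit formula G for g
  set G : ℂ → ℂ := fun z => dslope p 0 z * (p z + 1)⁻¹ with hGdef
  have h0mem : (0 : ℂ) ∈ ball (0 : ℂ) 1 := mem_ball_self one_pos
  have hpd0 : DifferentiableAt ℂ p 0 := (hpa 0 h0mem).differentiableAt
  have hdsd : DifferentiableAt ℂ (dslope p 0) 0 := by
    have : AnalyticAt ℂ p 0 := hpa 0 h0mem
    obtain ⟨P, hP⟩ := this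
    exact (AnalyticAt.differentiableAt ⟨P.fslope, hP.has_fpower_series_dslope_fslope⟩)
  have hinvd : DifferentiableAt ℂ (fun z => (p z + 1)⁻¹) 0 := by
    refine DifferentiableAt.inv ?_ ?_
    · exact hpd0.add_const 1
    · exact hpne 0 h0mem
  have heq : ∀ z : ℂ, z ≠ 0 → g z = G z := by
    intro z hz
    simp only [hgdef, hGdef]
    rw [dslope_of_ne _ hz, dslope_of_ne _ hz, slope_def_field, slope_def_field,
      hω0, hp0]
    simp only [hω]
    ring
  have hg0G0 : g 0 = G 0 := by
    have hgc : ContinuousAt g 0 :=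
      (hgd.continuousOn.continuousAt (ball_mem_nhds _ one_pos))
    have hGc : ContinuousAt G 0 :=
      (hdsd.continuousAt.mul hinvd.continuousAt)
    have h1 : Tendsto g (nhdsWithin 0 {(0 : ℂ)}ᶜ) (nhds (g 0)) :=
      hgc.tendsto.mono_left nhdsWithin_le_nhds
    have h2 : Tendsto G (nhdsWithin 0 {(0 : ℂ)}ᶜ) (nhds (G 0)) :=
      hGc.tendsto.mono_left nhdsWithin_le_nhds
    have h1' : Tendsto G (nhdsWithin 0 {(0 : ℂ)}ᶜ) (nhds (g 0)) := by
      refine h1.congr' ?_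
      filter_upwards [self_mem_nhdsWithin] with z hz
      exact heq z hz
    exact tendsto_nhds_unique h1' h2
  have hgG : g = G := by
    funext z
    by_cases hz : z = 0
    · rw [hz]; exact hg0G0
    · exact heq z hz
  -- values of g and its derivative at 0
  have hds00 : dslope p 0 0 = c 1 := by rw [dslope_same]; exact hd1
  have hG0 : G 0 = c 1 * 2⁻¹ := by
    simp only [hGdef, hds00, hp0]
    norm_num
  have hderivinv : deriv (fun z => (p z + 1)⁻¹) 0 = -(c 1) / 4 := by
    rw [deriv_fun_inv'' (hpd0.add_const 1) (hpne 0 h0mem)]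
    rw [deriv_add_const, hd1, hp0]
    norm_num
  have hGderiv : deriv G 0 = c 2 * 2⁻¹ + c 1 * (-(c 1) / 4) := by
    rw [hGdef]
    rw [deriv_fun_mul hdsd hinvd, hd2, hds00, hderivinv, hp0]
    norm_num
  -- abbreviations
  set a : ℂ := g 0 with hadef
  set b : ℂ := deriv g 0 with hbdef
  have ha_le : ‖a‖ ≤ 1 := hg_le 0 h0mem
  -- Schwarz–Pick: ‖b‖ ≤ 1 - ‖a‖ ^ 2
  have hb_le : ‖b‖ ≤ 1 - ‖a‖ ^ 2 := by
    rcases lt_or_eq_of_le ha_le with ha1 | ha1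
    · -- main case ‖a‖ < 1
      set u : ℂ → ℂ := fun z => 1 - (starRingEnd ℂ) a * g z with hudef
      have hune : ∀ z ∈ ball (0 : ℂ) 1, u z ≠ 0 := by
        intro z hz h
        have h2 : (1 : ℂ) = (starRingEnd ℂ) a * g z := sub_eq_zero.mp h
        have h1 : ‖(starRingEnd ℂ) a * g z‖ ≤ ‖a‖ := by
          rw [norm_mul, RCLike.norm_conj]
          calc ‖a‖ * ‖g z‖ ≤ ‖a‖ * 1 :=
                mul_le_mul_of_nonneg_left (hg_le z hz) (norm_nonneg _)
            _ = ‖a‖ := mul_one _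
        rw [← h2, norm_one] at h1
        linarith
      have hgd0 : DifferentiableAt ℂ g 0 := hgd.differentiableAt (ball_mem_nhds _ one_pos)
      have hud : DifferentiableOn ℂ u (ball (0 : ℂ) 1) := by
        simp only [hudef]
        exact (differentiableOn_const _).sub ((differentiableOn_const _).mul hgd)
      have hud0 : DifferentiableAt ℂ u 0 := by
        simp only [hudef]
        exact (differentiableAt_const _).sub ((differentiableAt_const _).mul hgd0)
      have huid0 : DifferentiableAt ℂ (fun z => (u z)⁻¹) 0 :=
        hud0.inv (hune 0 h0mem)
      have hhd : DifferentiableOn ℂ (fun z => (g z - a) * (u z)⁻¹) (ball (0 : ℂ) 1) :=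
        (hgd.sub (differentiableOn_const a)).mul (hud.inv hune)
      have hh0 : (g 0 - a) * (u 0)⁻¹ = 0 := by
        rw [← hadef, sub_self, zero_mul]
      have hh_le : ∀ z ∈ ball (0 : ℂ) 1, ‖(g z - a) * (u z)⁻¹‖ ≤ 1 := by
        intro z hz
        have hnum : ‖g z - a‖ ≤ ‖u z‖ := by
          simp only [hudef]
          have ha2 : ‖a‖ ^ 2 ≤ 1 := by
            nlinarith [norm_nonneg a, ha_le]
          have hw2 : ‖g z‖ ^ 2 ≤ 1 := by
            nlinarith [norm_nonneg (g z), hg_le z hz]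
          apply CaraAux.abs_le_abs_of_normSq_le
          have hA2 : a.re ^ 2 + a.im ^ 2 ≤ 1 := by
            have := Complex.sq_norm a
            rw [Complex.normSq_apply] at this
            nlinarith
          have hW2 : (g z).re ^ 2 + (g z).im ^ 2 ≤ 1 := by
            have := Complex.sq_norm (g z)
            rw [Complex.normSq_apply] at this
            nlinarith
          simp only [Complex.normSq_apply, Complex.sub_re, Complex.sub_im, Complex.mul_re,
            Complex.mul_im, Complex.one_re, Complex.one_im, Complex.conj_re, Complex.conj_im]
          nlinarith [mul_nonneg (sub_nonneg.2 hA2) (sub_nonneg.2 hW2)]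
        rw [norm_mul, norm_inv]
        have hupos : (0 : ℝ) < ‖u z‖ := norm_pos_iff.2 (hune z hz)
        calc ‖g z - a‖ * ‖u z‖⁻¹ ≤ ‖u z‖ * ‖u z‖⁻¹ := by gcongr
          _ = 1 := mul_inv_cancel₀ (ne_of_gt hupos)
      have hder_le : ‖deriv (fun z => (g z - a) * (u z)⁻¹) 0‖ ≤ 1 := by
        refine le_of_forall_pos_le_add ?_
        intro ε hε
        have hmaps : MapsTo (fun z => (g z - a) * (u z)⁻¹) (ball (0 : ℂ) 1)
            (ball ((g 0 - a) * (u 0)⁻¹) (1 + ε)) := by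
          intro z hz
          rw [hh0, mem_ball, dist_zero_right]
          exact lt_of_le_of_lt (hh_le z hz) (by linarith)
        have := Complex.norm_deriv_le_div_of_mapsTo_ball hhd (hmaps.mono_right ball_subset_closedBall) one_pos
        calc ‖deriv (fun z => (g z - a) * (u z)⁻¹) 0‖ ≤ (1 + ε) / 1 := this
          _ = 1 + ε := by norm_num
      have hderh : deriv (fun z => (g z - a) * (u z)⁻¹) 0 = b * (u 0)⁻¹ := by
        rw [deriv_fun_mul (hgd0.sub_const a) huid0]
        rw [← hadef, sub_self, zero_mul, add_zero, deriv_sub_const, ← hbdef]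
      have hu0 : u 0 = ((1 - ‖a‖ ^ 2 : ℝ) : ℂ) := by
        simp only [hudef, ← hadef]
        rw [mul_comm, Complex.mul_conj]
        rw [Complex.normSq_eq_norm_sq]
        push_cast
        ring
      have hu0ne : u 0 ≠ 0 := hune 0 h0mem
      have hbval : b = deriv (fun z => (g z - a) * (u z)⁻¹) 0 * u 0 := by
        rw [hderh]
        field_simp
      have hnorm_u0 : ‖u 0‖ = 1 - ‖a‖ ^ 2 := by
        rw [hu0, Complex.norm_real, Real.norm_eq_abs, abs_of_nonneg]
        nlinarith [norm_nonneg a]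
      calc ‖b‖ = ‖deriv (fun z => (g z - a) * (u z)⁻¹) 0‖ * ‖u 0‖ := by
            rw [hbval, norm_mul]
        _ ≤ 1 * (1 - ‖a‖ ^ 2) := by
            rw [hnorm_u0]
            apply mul_le_mul_of_nonneg_right hder_le
            nlinarith [norm_nonneg a]
        _ = 1 - ‖a‖ ^ 2 := one_mul _
    · -- boundary case ‖a‖ = 1 : g is constant by maximum modulus
      have hmax : IsMaxOn (norm ∘ g) (ball (0 : ℂ) 1) 0 := by
        apply isMaxOn_iff.mpr
        intro z hz
        simp only [Function.comp_apply]
        exact le_trans (hg_le z hz) (le_of_eq ha1.symm)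
      have hconst := Complex.eqOn_of_isPreconnected_of_isMaxOn_norm
        (convex_ball (0 : ℂ) 1).isPreconnected isOpen_ball hgd h0mem hmax
      have hev : g =ᶠ[nhds 0] fun _ => g 0 :=
        hconst.eventuallyEq_of_mem (ball_mem_nhds _ one_pos)
      have hzero : deriv g 0 = 0 := by
        rw [hev.deriv_eq]
        exact deriv_const _ _
      have hb0 : ‖b‖ = 0 := by rw [hbdef, hzero, norm_zero]
      rw [hb0, ha1]
      norm_num
  -- translate to coefficients
  have haval : a = c 1 * 2⁻¹ := hg0G0.trans hG0
  have hc1 : c 1 = 2 * a := by rw [haval]; ring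
  have hbcoeff : b = c 2 * 2⁻¹ + c 1 * (-(c 1) / 4) := by
    rw [hbdef, hgG, hGderiv]
  have hc2 : c 2 = 2 * b + 2 * a ^ 2 := by
    rw [hbcoeff, hc1]; ring
  have hkey : c 2 - (l : ℂ) * c 1 ^ 2 = 2 * b + ((2 - 4 * l : ℝ) : ℂ) * a ^ 2 := by
    rw [hc2, hc1]; push_cast; ring
  set A := ‖a‖ with hAdef
  set B := ‖b‖ with hBdef
  have hA0 : 0 ≤ A := norm_nonneg a
  have hA1 : A ≤ 1 := by rw [hAdef]; exact ha_le
  have hA2 : A ^ 2 ≤ 1 := by nlinarith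
  have hB0 : 0 ≤ B := norm_nonneg b
  have hB : B ≤ 1 - A ^ 2 := by
    rw [hBdef, hAdef]; exact hb_le
  have habs : ‖c 2 - (l : ℂ) * c 1 ^ 2‖ ≤ 2 * B + |2 - 4 * l| * A ^ 2 := by
    rw [hkey]
    refine le_trans (norm_add_le _ _) ?_
    rw [norm_mul, norm_mul, norm_pow, Complex.norm_two, Complex.norm_real, Real.norm_eq_abs]
  have habs1 : ‖c 1‖ = 2 * A := by
    rw [hc1, norm_mul, Complex.norm_two]
  clear_value A B a b g G ω
  clear hω hωd hω0 hωmaps hgdef hωmaps' hg_le hgd hGdef h0mem hpd0 hdsd hinvd heq hgG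
    hds00 hG0 hderivinv hGderiv hg0G0 hadef hbdef ha_le hb_le haval hc1 hbcoeff hc2 hkey
    hAdef hBdef hrep hpa hpre hd1 hd2 hpne hc0 hp0
  clear G g ω b a p
  refine ⟨?_, ?_, ?_, ?_, ?_⟩
  · intro hl
    rw [abs_of_nonneg (by linarith : (0 : ℝ) ≤ 2 - 4 * l)] at habs
    nlinarith [mul_nonneg (neg_nonneg.2 hl) (sub_nonneg.2 hA2)]
  · rintro ⟨hl0, hl1⟩
    rcases le_or_gt l (1 / 2) with h12 | h12
    · rw [abs_of_nonneg (by linarith : (0 : ℝ) ≤ 2 - 4 * l)] at habs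
      nlinarith [mul_nonneg hl0 (sq_nonneg A)]
    · rw [abs_of_nonpos (by linarith : (2 - 4 * l : ℝ) ≤ 0)] at habs
      nlinarith [mul_nonneg (sub_nonneg.2 hl1) (sq_nonneg A)]
  · intro hl
    rw [abs_of_nonpos (by linarith : (2 - 4 * l : ℝ) ≤ 0)] at habs
    nlinarith [mul_nonneg (by linarith : (0 : ℝ) ≤ 4 * l - 4) (sub_nonneg.2 hA2)]
  · rintro ⟨hl0, hl1⟩
    rw [abs_of_nonneg (by linarith : (0 : ℝ) ≤ 2 - 4 * l)] at habs
    rw [habs1]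
    nlinarith
  · rintro ⟨hl0, hl1⟩
    rw [abs_of_nonpos (by linarith : (2 - 4 * l : ℝ) ≤ 0)] at habs
    rw [habs1]
    nlinarith
end
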